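/- arXiv:1610.06320 — 4 statements merged into one kernel-verified Lean document; each statement's English description precedes it below -/
import Mathlib

section
/- There exists a constant c > 0 depending only on p such that for all δ ≥ 0, all d ≥ 1 and all real d×d matrices P, Q: if 1 < p ≤ 2 then |F(P)−F(Q)|² ≤ c·|P^sym−Q^sym|^p, and if p ≥ 2 then |P^sym−Q^sym|^p ≤ c·|F(P)−F(Q)|². -/
open Matrix

/-- Symmetric part `P^sym = (P + Pᵀ)/2` of a square matrix. -/
noncomputable def msym {d : ℕ} (P : Matrix (Fin d) (Fin d) ℝ) : Matrix (Fin d) (Fin d) ℝ :=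
  (2⁻¹ : ℝ) • (P + Pᵀ)

/-- Frobenius inner product `A:B = ∑ᵢⱼ Aᵢⱼ Bᵢⱼ`. -/
noncomputable def mdot {d : ℕ} (A B : Matrix (Fin d) (Fin d) ℝ) : ℝ :=
  ∑ i, ∑ j, A i j * B i j

/-- Frobenius norm `|A| = (A:A)^(1/2)`. -/
noncomputable def mnorm {d : ℕ} (A : Matrix (Fin d) (Fin d) ℝ) : ℝ :=
  Real.sqrt (mdot A A)

/-- Stress tensor `S(P) = (δ + |P^sym|)^(p-2) • P^sym` (real power, `0^r = 0` for `r < 0`). -/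
noncomputable def Smap (p δ : ℝ) {d : ℕ} (P : Matrix (Fin d) (Fin d) ℝ) :
    Matrix (Fin d) (Fin d) ℝ :=
  ((δ + mnorm (msym P)) ^ (p - 2)) • msym P

/-- Associated function `F(P) = (δ + |P^sym|)^((p-2)/2) • P^sym`. -/
noncomputable def Fmap (p δ : ℝ) {d : ℕ} (P : Matrix (Fin d) (Fin d) ℝ) :
    Matrix (Fin d) (Fin d) ℝ :=
  ((δ + mnorm (msym P)) ^ ((p - 2) / 2)) • msym P

section Abstract

open scoped RealInnerProductSpace

variable {E : Type*} [NormedAddCommGroup E] [InnerProductSpace ℝ E]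

/-- The abstract version of `Fmap` in an inner product space. -/
noncomputable def Gmap (p δ : ℝ) (A : E) : E := ((δ + ‖A‖) ^ ((p - 2) / 2)) • A

/-- Bernoulli-type inequality: `a^t ≤ b^t + t b^(t-1) (a-b)` for `0 ≤ t ≤ 1`, `0 < b ≤ a`. -/
lemma bern_aux {t a b : ℝ} (ht0 : 0 ≤ t) (ht1 : t ≤ 1) (hb : 0 < b) (hab : b ≤ a) :
    a ^ t ≤ b ^ t + t * b ^ (t - 1) * (a - b) := by
  have hu : (0:ℝ) ≤ (a - b) / b := div_nonneg (by linarith) hb.le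
  have key : ((1 : ℝ) + (a - b) / b) ^ t ≤ 1 + t * ((a - b) / b) :=
    rpow_one_add_le_one_add_mul_self (by linarith) ht0 ht1
  have ha : a = b * (1 + (a - b) / b) := by field_simp; ring
  have h2 : a ^ t = b ^ t * (1 + (a - b) / b) ^ t := by
    nth_rewrite 1 [ha]
    rw [Real.mul_rpow hb.le (by linarith)]
  have hbt : (0:ℝ) ≤ b ^ t := Real.rpow_nonneg hb.le t
  have h3 : a ^ t ≤ b ^ t * (1 + t * ((a - b) / b)) := by
    rw [h2]; exact mul_le_mul_of_nonneg_left key hbt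
  have h4 : b ^ t * (1 + t * ((a - b) / b)) = b ^ t + t * (b ^ t / b) * (a - b) := by
    field_simp
  have h5 : b ^ t / b = b ^ (t - 1) := by
    rw [Real.rpow_sub hb, Real.rpow_one]
  rw [h4, h5] at h3; exact h3

/-- Upper bound for `1 < p ≤ 2`. -/
lemma upper_aux {p δ : ℝ} (hp1 : 1 < p) (hp2 : p ≤ 2) (hδ : 0 ≤ δ) (A B : E)
    (hBA : ‖B‖ ≤ ‖A‖) :
    ‖Gmap p δ A - Gmap p δ B‖ ≤ 2 * ‖A - B‖ ^ (p / 2) := by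
  set t : ℝ := (2 - p) / 2 with hts
  have hexp : (p - 2) / 2 = -t := by rw [hts]; ring
  have ht0 : 0 ≤ t := by rw [hts]; linarith
  have ht2 : t < 1/2 := by rw [hts]; linarith
  set a : ℝ := δ + ‖A‖ with has
  set b : ℝ := δ + ‖B‖ with hbs
  set n : ℝ := ‖A - B‖ with hns
  have hn0 : 0 ≤ n := norm_nonneg _
  have ha0 : 0 ≤ a := by positivity
  have hb0 : 0 ≤ b := by positivity
  have hba : b ≤ a := by rw [has, hbs]; linarith
  have hn2a : n ≤ 2 * a := by
    have := norm_sub_le A B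
    have hA : (0:ℝ) ≤ ‖A‖ := norm_nonneg _
    rw [hns, has]; linarith
  have habn : a - b ≤ n := by
    have := norm_sub_norm_le A B
    rw [has, hbs, hns]; linarith
  have hGsub : Gmap p δ A - Gmap p δ B
      = (a ^ (-t)) • (A - B) + (a ^ (-t) - b ^ (-t)) • B := by
    rw [Gmap, Gmap, hexp, ← has, ← hbs]
    module
  have hrp2 : 0 ≤ n ^ (p/2) := Real.rpow_nonneg hn0 _
  -- the coefficient bound `2^t + t ≤ 2`
  have hcoef : (2:ℝ) ^ t + t ≤ 2 := by
    have h1 : (2:ℝ) ^ t ≤ (2:ℝ) ^ (1/2 : ℝ) :=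
      Real.rpow_le_rpow_of_exponent_le (by norm_num) (by linarith)
    have h2 : (2:ℝ) ^ (1/2 : ℝ) = Real.sqrt 2 := (Real.sqrt_eq_rpow 2).symm
    have h3 : Real.sqrt 2 ≤ 3/2 := by
      nlinarith [Real.sq_sqrt (show (0:ℝ) ≤ 2 by norm_num), Real.sqrt_nonneg 2]
    linarith
  by_cases hbz : b = 0
  · -- then δ = 0 and B = 0
    have hδ0 : δ = 0 := by
      have hB : (0:ℝ) ≤ ‖B‖ := norm_nonneg _
      rw [hbs] at hbz; linarith
    have hB0 : B = 0 := by
      have : ‖B‖ = 0 := by rw [hbs] at hbz; linarith [norm_nonneg B]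
      exact norm_eq_zero.mp this
    have hGB : Gmap p δ B = 0 := by rw [Gmap, hB0, smul_zero]
    have hna : n = a := by rw [hns, has, hB0, sub_zero, hδ0, zero_add]
    by_cases haz : a = 0
    · have hA0 : A = 0 := by
        have : ‖A‖ = 0 := by rw [has, hδ0, zero_add] at haz; exact haz
        exact norm_eq_zero.mp this
      have : Gmap p δ A = 0 := by rw [Gmap, hA0, smul_zero]
      rw [this, hGB, sub_zero, norm_zero]
      positivity
    · have hapos : 0 < a := lt_of_le_of_ne ha0 (Ne.symm haz)
      have hGA : ‖Gmap p δ A‖ = a ^ (-t) * ‖A‖ := by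
        rw [Gmap, hexp, ← has, norm_smul, Real.norm_eq_abs,
          abs_of_nonneg (Real.rpow_nonneg ha0 _)]
      have hAn : ‖A‖ = a := by rw [has, hδ0, zero_add]
      have : a ^ (-t) * a = a ^ (p/2) := by
        rw [← Real.rpow_add_one hapos.ne' (-t), show -t + 1 = p/2 by rw [hts]; ring]
      have h1 : ‖Gmap p δ A - Gmap p δ B‖ = a ^ (p/2) := by
        rw [hGB, sub_zero, hGA, hAn, this]
      rw [h1, hna]
      nlinarith [Real.rpow_nonneg ha0 (p/2)]
  · have hbpos : 0 < b := lt_of_le_of_ne hb0 (Ne.symm hbz)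
    have hapos : 0 < a := lt_of_lt_of_le hbpos hba
    -- norm triangle
    have htri : ‖Gmap p δ A - Gmap p δ B‖
        ≤ a ^ (-t) * n + (b ^ (-t) - a ^ (-t)) * ‖B‖ := by
      rw [hGsub]
      refine le_trans (norm_add_le _ _) ?_
      rw [norm_smul, norm_smul, Real.norm_eq_abs, Real.norm_eq_abs,
        abs_of_nonneg (Real.rpow_nonneg ha0 _), ← hns]
      have : |a ^ (-t) - b ^ (-t)| = b ^ (-t) - a ^ (-t) := by
        rw [abs_sub_comm, abs_of_nonneg]
        have := Real.rpow_le_rpow_of_nonpos hbpos hba (neg_nonpos.mpr ht0)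
        linarith
      rw [this]
    -- Term 1 : a^(-t) * n ≤ 2^t * n^(p/2)
    have hT1 : a ^ (-t) * n ≤ 2 ^ t * n ^ (p/2) := by
      by_cases hnz : n = 0
      · rw [hnz, mul_zero]; positivity
      · have hnpos : 0 < n := lt_of_le_of_ne hn0 (Ne.symm hnz)
        have h1 : n / 2 ≤ a := by linarith
        have h3 : a ^ (-t) ≤ (n/2) ^ (-t) :=
          Real.rpow_le_rpow_of_nonpos (by positivity) h1 (neg_nonpos.mpr ht0)
        have h4 : (n/2) ^ (-t) * n = 2 ^ t * n ^ (p/2) := by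
          have e1 : (n/2 : ℝ) ^ (-t) = n ^ (-t) * 2 ^ t := by
            rw [Real.div_rpow hn0 (by norm_num : (0:ℝ) ≤ 2),
              Real.rpow_neg (by norm_num : (0:ℝ) ≤ 2), div_eq_mul_inv, inv_inv]
          rw [e1, show n ^ (-t) * 2 ^ t * n = 2 ^ t * (n ^ (-t) * n) by ring,
            ← Real.rpow_add_one hnpos.ne' (-t), show -t + 1 = p/2 by rw [hts]; ring]
        calc a ^ (-t) * n ≤ (n/2) ^ (-t) * n := mul_le_mul_of_nonneg_right h3 hn0
          _ = 2 ^ t * n ^ (p/2) := h4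
    -- Term 2 : (b^(-t) - a^(-t)) * ‖B‖ ≤ t * n^(p/2)
    have hT2 : (b ^ (-t) - a ^ (-t)) * ‖B‖ ≤ t * n ^ (p/2) := by
      by_cases habz : a = b
      · rw [habz, sub_self, zero_mul]; positivity
      · have habpos : 0 < a - b := by
          rcases lt_or_eq_of_le hba with h | h
          · linarith
          · exact absurd h.symm habz
        have hnpos : 0 < n := lt_of_lt_of_le habpos habn
        -- b^(-t) - a^(-t) = (a^t - b^t)/(a^t b^t)
        have hat : 0 < a ^ t := Real.rpow_pos_of_pos hapos t
        have hbt : 0 < b ^ t := Real.rpow_pos_of_pos hbpos t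
        have hdiff : b ^ (-t) - a ^ (-t) = (a ^ t - b ^ t) / (a ^ t * b ^ t) := by
          rw [Real.rpow_neg ha0, Real.rpow_neg hb0]
          field_simp
        have hbern : a ^ t - b ^ t ≤ t * b ^ (t-1) * (a - b) := by
          have := bern_aux ht0 (by linarith) hbpos hba
          linarith
        have hbt1 : b ^ (t - 1) = b ^ t / b := by
          rw [Real.rpow_sub hbpos, Real.rpow_one]
        have hstep : b ^ (-t) - a ^ (-t) ≤ t * (a - b) / (a ^ t * b) := by
          rw [hdiff]
          have h1 : (a ^ t - b ^ t) / (a ^ t * b ^ t)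
              ≤ (t * b ^ (t-1) * (a - b)) / (a ^ t * b ^ t) := by
            gcongr
          refine h1.trans ?_
          apply le_of_eq
          rw [hbt1]; field_simp
        have hBb : ‖B‖ ≤ b := by rw [hbs]; linarith [norm_nonneg B]
        have h2 : (b ^ (-t) - a ^ (-t)) * ‖B‖ ≤ (t * (a - b) / (a ^ t * b)) * b := by
          have hnn : 0 ≤ b ^ (-t) - a ^ (-t) := by
            have := Real.rpow_le_rpow_of_nonpos hbpos hba (neg_nonpos.mpr ht0)
            linarith
          calc (b ^ (-t) - a ^ (-t)) * ‖B‖ ≤ (b ^ (-t) - a ^ (-t)) * b :=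
                mul_le_mul_of_nonneg_left hBb hnn
            _ ≤ (t * (a - b) / (a ^ t * b)) * b :=
                mul_le_mul_of_nonneg_right hstep hb0
        have h3 : (t * (a - b) / (a ^ t * b)) * b = t * (a - b) / a ^ t := by
          field_simp
        have h4 : t * (a - b) / a ^ t ≤ t * (a - b) / (a - b) ^ t :=
          div_le_div_of_nonneg_left (by positivity) (by positivity)
            (Real.rpow_le_rpow habpos.le (by linarith) ht0)
        have h5 : t * (a - b) / (a - b) ^ t = t * (a - b) ^ (p/2) := by
          rw [mul_div_assoc]
          congr 1
          rw [div_eq_mul_inv, ← Real.rpow_neg habpos.le, mul_comm,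
            ← Real.rpow_add_one habpos.ne' (-t), show -t + 1 = p/2 by rw [hts]; ring]
        have h6 : t * (a - b) ^ (p/2) ≤ t * n ^ (p/2) := by
          apply mul_le_mul_of_nonneg_left _ ht0
          exact Real.rpow_le_rpow habpos.le habn (by linarith)
        calc (b ^ (-t) - a ^ (-t)) * ‖B‖ ≤ (t * (a - b) / (a ^ t * b)) * b := h2
          _ = t * (a - b) / a ^ t := h3
          _ ≤ t * (a - b) / (a - b) ^ t := h4
          _ = t * (a - b) ^ (p/2) := h5
          _ ≤ t * n ^ (p/2) := h6
    calc ‖Gmap p δ A - Gmap p δ B‖ ≤ a ^ (-t) * n + (b ^ (-t) - a ^ (-t)) * ‖B‖ := htri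
      _ ≤ 2 ^ t * n ^ (p/2) + t * n ^ (p/2) := add_le_add hT1 hT2
      _ = (2 ^ t + t) * n ^ (p/2) := by ring
      _ ≤ 2 * n ^ (p/2) := mul_le_mul_of_nonneg_right hcoef hrp2

/-- Lower bound for `p ≥ 2`. -/
lemma lower_aux {p δ : ℝ} (hp2 : 2 ≤ p) (hδ : 0 ≤ δ) (A B : E)
    (hBA : ‖B‖ ≤ ‖A‖) :
    ‖A - B‖ ^ (p/2) ≤ 2 ^ (p/2) * ‖Gmap p δ A - Gmap p δ B‖ := by
  set s : ℝ := (p - 2) / 2 with hss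
  have hs0 : 0 ≤ s := by rw [hss]; linarith
  set a : ℝ := δ + ‖A‖ with has
  set b : ℝ := δ + ‖B‖ with hbs
  set n : ℝ := ‖A - B‖ with hns
  have hn0 : 0 ≤ n := norm_nonneg _
  have ha0 : 0 ≤ a := by positivity
  have hb0 : 0 ≤ b := by positivity
  have hba : b ≤ a := by rw [has, hbs]; linarith
  have hasb : b ^ s ≤ a ^ s := Real.rpow_le_rpow hb0 hba hs0
  have hn2a : n ≤ 2 * a := by
    have := norm_sub_le A B
    have hA : (0:ℝ) ≤ ‖A‖ := norm_nonneg _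
    rw [hns, has]; linarith
  -- key identity for the inner product
  have hkey : inner ℝ (Gmap p δ A - Gmap p δ B) (A - B)
      = (a ^ s + b ^ s) / 2 * n ^ 2 + (a ^ s - b ^ s) * (‖A‖ ^ 2 - ‖B‖ ^ 2) / 2 := by
    rw [Gmap, Gmap, ← hss, ← has, ← hbs]
    rw [inner_sub_left, real_inner_smul_left, real_inner_smul_left,
      inner_sub_right, inner_sub_right]
    have e1 : n ^ 2 = ‖A‖ ^ 2 - 2 * ⟪A, B⟫ + ‖B‖ ^ 2 := by
      rw [hns]; exact norm_sub_sq_real A B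
    have e2 : ⟪A, A⟫ = ‖A‖ ^ 2 := real_inner_self_eq_norm_sq A
    have e3 : ⟪B, B⟫ = ‖B‖ ^ 2 := real_inner_self_eq_norm_sq B
    have e4 : ⟪B, A⟫ = ⟪A, B⟫ := real_inner_comm A B
    rw [e2, e3, e4, e1]; ring
  have hDnn : 0 ≤ ‖A‖ ^ 2 - ‖B‖ ^ 2 := by
    nlinarith [norm_nonneg B]
  have hlow : a ^ s / 2 * n ^ 2 ≤ inner ℝ (Gmap p δ A - Gmap p δ B) (A - B) := by
    rw [hkey]
    have h1 : 0 ≤ (a ^ s - b ^ s) * (‖A‖ ^ 2 - ‖B‖ ^ 2) / 2 := by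
      apply div_nonneg _ (by norm_num)
      exact mul_nonneg (by linarith) hDnn
    have h2 : 0 ≤ b ^ s := Real.rpow_nonneg hb0 s
    nlinarith [sq_nonneg n]
  have hCS : inner ℝ (Gmap p δ A - Gmap p δ B) (A - B)
      ≤ ‖Gmap p δ A - Gmap p δ B‖ * n := by
    rw [hns]; exact real_inner_le_norm _ _
  by_cases hnz : n = 0
  · rw [hnz, Real.zero_rpow (show p/2 ≠ 0 by positivity)]
    positivity
  · have hnpos : 0 < n := lt_of_le_of_ne hn0 (Ne.symm hnz)
    have hmain : a ^ s * n ≤ 2 * ‖Gmap p δ A - Gmap p δ B‖ := by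
      have h := hlow.trans hCS
      nlinarith [Real.rpow_nonneg ha0 s, norm_nonneg (Gmap p δ A - Gmap p δ B)]
    have hna : n ^ s ≤ 2 ^ s * a ^ s := by
      have h1 : n ^ s ≤ (2 * a) ^ s := Real.rpow_le_rpow hn0 hn2a hs0
      rw [Real.mul_rpow (by norm_num) ha0] at h1
      exact h1
    have hsplit : n ^ (p/2) = n ^ s * n := by
      rw [show p/2 = s + 1 by rw [hss]; ring, Real.rpow_add_one hnpos.ne' s]
    have h2s : (2:ℝ) ^ s * 2 = 2 ^ (p/2) := by
      rw [show p/2 = s + 1 by rw [hss]; ring, Real.rpow_add_one (by norm_num : (2:ℝ) ≠ 0) s]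
    calc n ^ (p/2) = n ^ s * n := hsplit
      _ ≤ (2 ^ s * a ^ s) * n := mul_le_mul_of_nonneg_right hna hn0
      _ = 2 ^ s * (a ^ s * n) := by ring
      _ ≤ 2 ^ s * (2 * ‖Gmap p δ A - Gmap p δ B‖) :=
          mul_le_mul_of_nonneg_left hmain (Real.rpow_nonneg (by norm_num) s)
      _ = 2 ^ (p/2) * ‖Gmap p δ A - Gmap p δ B‖ := by rw [← h2s]; ring

end Abstract

/-- Matrices to Euclidean space, preserving the Frobenius structure. -/
noncomputable def toE {d : ℕ} (A : Matrix (Fin d) (Fin d) ℝ) :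
    EuclideanSpace ℝ (Fin d × Fin d) := WithLp.toLp 2 (fun ij : Fin d × Fin d => A ij.1 ij.2)

lemma toE_sub {d : ℕ} (A B : Matrix (Fin d) (Fin d) ℝ) : toE (A - B) = toE A - toE B := rfl

lemma toE_smul {d : ℕ} (r : ℝ) (A : Matrix (Fin d) (Fin d) ℝ) : toE (r • A) = r • toE A := rfl

lemma mnorm_eq {d : ℕ} (A : Matrix (Fin d) (Fin d) ℝ) : mnorm A = ‖toE A‖ := by
  rw [mnorm, mdot, EuclideanSpace.norm_eq]
  congr 1
  rw [Fintype.sum_prod_type]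
  refine Finset.sum_congr rfl fun i _ => Finset.sum_congr rfl fun j _ => ?_
  rw [Real.norm_eq_abs, sq_abs, sq]
  rfl

lemma toE_Fmap (p δ : ℝ) {d : ℕ} (P : Matrix (Fin d) (Fin d) ℝ) :
    toE (Fmap p δ P) = Gmap p δ (toE (msym P)) := by
  rw [Fmap, Gmap, toE_smul, mnorm_eq]

/-- There is a constant `c > 0` depending only on `p > 1` such that for all `δ ≥ 0`,
`d ≥ 1` and all real `d×d` matrices `P, Q`: if `p ≤ 2` then
`|F(P)-F(Q)|² ≤ c * |P^sym - Q^sym|^p`, and if `p ≥ 2` then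
`|P^sym - Q^sym|^p ≤ c * |F(P)-F(Q)|²`. -/
theorem stmt11 (p : ℝ) (hp : 1 < p) :
    ∃ c : ℝ, 0 < c ∧
      ∀ δ : ℝ, 0 ≤ δ → ∀ d : ℕ, 1 ≤ d → ∀ P Q : Matrix (Fin d) (Fin d) ℝ,
        (p ≤ 2 →
          mnorm (Fmap p δ P - Fmap p δ Q) ^ 2 ≤ c * mnorm (msym P - msym Q) ^ p) ∧
        (2 ≤ p →
          mnorm (msym P - msym Q) ^ p ≤ c * mnorm (Fmap p δ P - Fmap p δ Q) ^ 2) := by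
  refine ⟨2 ^ p + 4, by positivity, ?_⟩
  intro δ hδ d hd P Q
  set A : EuclideanSpace ℝ (Fin d × Fin d) := toE (msym P) with hA
  set B : EuclideanSpace ℝ (Fin d × Fin d) := toE (msym Q) with hB
  have hF : mnorm (Fmap p δ P - Fmap p δ Q) = ‖Gmap p δ A - Gmap p δ B‖ := by
    rw [mnorm_eq, toE_sub, toE_Fmap, toE_Fmap, hA, hB]
  have hD : mnorm (msym P - msym Q) = ‖A - B‖ := by
    rw [mnorm_eq, toE_sub, hA, hB]
  -- the two WLOG versions of the bounds
  have hup : p ≤ 2 → ‖Gmap p δ A - Gmap p δ B‖ ≤ 2 * ‖A - B‖ ^ (p/2) := by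
    intro hp2
    rcases le_total ‖B‖ ‖A‖ with h | h
    · exact upper_aux hp hp2 hδ A B h
    · have := upper_aux hp hp2 hδ B A h
      rwa [norm_sub_rev (Gmap p δ B), norm_sub_rev B A] at this
  have hlo : 2 ≤ p → ‖A - B‖ ^ (p/2) ≤ 2 ^ (p/2) * ‖Gmap p δ A - Gmap p δ B‖ := by
    intro hp2
    rcases le_total ‖B‖ ‖A‖ with h | h
    · exact lower_aux hp2 hδ A B h
    · have := lower_aux hp2 hδ B A h
      rwa [norm_sub_rev (Gmap p δ B), norm_sub_rev B A] at this
  have hsq : (‖A - B‖ ^ (p/2)) ^ 2 = ‖A - B‖ ^ p := by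
    rw [← Real.rpow_natCast (‖A - B‖ ^ (p/2)) 2, ← Real.rpow_mul (norm_nonneg _)]
    norm_num
  have h2sq : ((2:ℝ) ^ (p/2)) ^ 2 = 2 ^ p := by
    rw [← Real.rpow_natCast ((2:ℝ) ^ (p/2)) 2, ← Real.rpow_mul (by norm_num : (0:ℝ) ≤ 2)]
    norm_num
  constructor
  · intro hp2
    rw [hF, hD]
    have h := hup hp2
    have h1 : ‖Gmap p δ A - Gmap p δ B‖ ^ 2 ≤ 4 * ‖A - B‖ ^ p := by
      nlinarith [norm_nonneg (Gmap p δ A - Gmap p δ B), Real.rpow_nonneg (norm_nonneg (A - B)) (p/2)]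
    have h2 : (0:ℝ) ≤ 2 ^ p * ‖A - B‖ ^ p := by positivity
    linarith
  · intro hp2
    rw [hF, hD]
    have h := hlo hp2
    have h1 : ‖A - B‖ ^ p ≤ 2 ^ p * ‖Gmap p δ A - Gmap p δ B‖ ^ 2 := by
      nlinarith [Real.rpow_nonneg (norm_nonneg (A - B)) (p/2),
        Real.rpow_nonneg (by norm_num : (0:ℝ) ≤ 2) (p/2),
        norm_nonneg (Gmap p δ A - Gmap p δ B)]
    have h2 : (0:ℝ) ≤ 4 * ‖Gmap p δ A - Gmap p δ B‖ ^ 2 := by positivity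
    linarith
end

section
/- Let p ∈ [2,∞) and δ ∈ [0,1]. There exist constants c₁, c₂ > 0 depending only on p such that for all measurable symmetric-matrix-valued functions G, H on Ω with ‖G‖_p, ‖H‖_p < ∞: ‖G−H‖_p^p ≤ c₁·‖F∘G − F∘H‖₂² and ‖F∘G − F∘H‖₂² ≤ c₂·(K + ‖G‖_p + ‖G−H‖_p)^{p−2}·‖G−H‖_p², where K = δ·|Ω|^{1/p}. -/
open Matrix

open MeasureTheory

namespace Stmt13Aux

open Real

/-! ### Abstract pointwise estimates in a real inner product space -/

section AbstractPointwise

variable {V : Type*} [NormedAddCommGroup V] [InnerProductSpace ℝ V]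

local notation "⟪" x ", " y "⟫" => @inner ℝ _ _ x y

lemma key_identity (φs φt : ℝ) (a b : V) :
    2 * ⟪φs • a - φt • b, a - b⟫
      = (φs + φt) * ‖a - b‖ ^ 2 + (φs - φt) * (‖a‖ ^ 2 - ‖b‖ ^ 2) := by
  have hab : ‖a - b‖ ^ 2 = ‖a‖ ^ 2 - 2 * ⟪a, b⟫ + ‖b‖ ^ 2 := norm_sub_sq_real a b
  have h1 : ⟪φs • a - φt • b, a - b⟫
      = φs * ⟪a, a⟫ - φs * ⟪a, b⟫ - φt * ⟪b, a⟫ + φt * ⟪b, b⟫ := by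
    simp [inner_sub_left, inner_sub_right, real_inner_smul_left]
    ring
  have h2 : ⟪a, a⟫ = ‖a‖ ^ 2 := real_inner_self_eq_norm_sq a
  have h3 : ⟪b, b⟫ = ‖b‖ ^ 2 := real_inner_self_eq_norm_sq b
  have h4 : ⟪b, a⟫ = ⟪a, b⟫ := real_inner_comm a b
  rw [h1, h2, h3, h4, hab]
  ring

lemma pairing_lower (r δ : ℝ) (hr : 0 ≤ r) (hδ : 0 ≤ δ) (a b : V) :
    (‖a - b‖ / 2) ^ r * ‖a - b‖ ^ 2 / 2
      ≤ ⟪((δ + ‖a‖) ^ r) • a - ((δ + ‖b‖) ^ r) • b, a - b⟫ := by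
  set s := ‖a‖ with hs
  set t := ‖b‖ with ht
  set n := ‖a - b‖ with hn
  have hs0 : 0 ≤ s := norm_nonneg a
  have ht0 : 0 ≤ t := norm_nonneg b
  have hn0 : 0 ≤ n := norm_nonneg _
  have hid := key_identity ((δ + s) ^ r) ((δ + t) ^ r) a b
  have hsec : 0 ≤ ((δ + s) ^ r - (δ + t) ^ r) * (s ^ 2 - t ^ 2) := by
    rcases le_total s t with h | h
    · have h1 : (δ + s) ^ r ≤ (δ + t) ^ r :=
        Real.rpow_le_rpow (by linarith) (by linarith) hr
      have h2 : s ^ 2 ≤ t ^ 2 := by nlinarith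
      exact mul_nonneg_of_nonpos_of_nonpos (by linarith) (by linarith)
    · have h1 : (δ + t) ^ r ≤ (δ + s) ^ r :=
        Real.rpow_le_rpow (by linarith) (by linarith) hr
      have h2 : t ^ 2 ≤ s ^ 2 := by nlinarith
      exact mul_nonneg (by linarith) (by linarith)
  have hmax : (n / 2) ^ r ≤ (δ + s) ^ r + (δ + t) ^ r := by
    have hnst : n ≤ s + t := by
      calc n = ‖a - b‖ := hn
        _ ≤ ‖a‖ + ‖b‖ := norm_sub_le a b
    rcases le_total s t with h | h
    · have : (n / 2) ^ r ≤ (δ + t) ^ r :=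
        Real.rpow_le_rpow (by linarith) (by linarith) hr
      have h0 : 0 ≤ (δ + s) ^ r := Real.rpow_nonneg (by linarith) r
      linarith
    · have : (n / 2) ^ r ≤ (δ + s) ^ r :=
        Real.rpow_le_rpow (by linarith) (by linarith) hr
      have h0 : 0 ≤ (δ + t) ^ r := Real.rpow_nonneg (by linarith) r
      linarith
  nlinarith [sq_nonneg n, Real.rpow_nonneg (div_nonneg hn0 (by norm_num : (0:ℝ) ≤ 2)) r]

lemma abs_lower (p δ : ℝ) (hp : 2 ≤ p) (hδ : 0 ≤ δ) (a b : V)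
    (hpair : (‖a - b‖ / 2) ^ ((p - 2) / 2) * ‖a - b‖ ^ 2 / 2
      ≤ ⟪((δ + ‖a‖) ^ ((p - 2) / 2)) • a - ((δ + ‖b‖) ^ ((p - 2) / 2)) • b, a - b⟫) :
    ‖a - b‖ ^ p
      ≤ 2 ^ p * ‖((δ + ‖a‖) ^ ((p - 2) / 2)) • a - ((δ + ‖b‖) ^ ((p - 2) / 2)) • b‖ ^ (2:ℝ) := by
  set r : ℝ := (p - 2) / 2 with hrdef
  set F : V := ((δ + ‖a‖) ^ r) • a - ((δ + ‖b‖) ^ r) • b with hF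
  set n : ℝ := ‖a - b‖ with hn
  have hn0 : 0 ≤ n := norm_nonneg _
  have hF0 : 0 ≤ ‖F‖ := norm_nonneg _
  rw [Real.rpow_two]
  rcases eq_or_lt_of_le hn0 with h0 | hpos
  · rw [← h0, Real.zero_rpow (by positivity)]
    positivity
  · have hCS : ⟪F, a - b⟫ ≤ ‖F‖ * n := by
      calc ⟪F, a - b⟫ ≤ ‖F‖ * ‖a - b‖ := real_inner_le_norm F (a - b)
        _ = ‖F‖ * n := rfl
    have hX : (n / 2) ^ r * (n / 2) ≤ ‖F‖ := by
      have h1 : ((n / 2) ^ r * (n / 2)) * n ≤ ‖F‖ * n := by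
        calc ((n / 2) ^ r * (n / 2)) * n = (n / 2) ^ r * n ^ 2 / 2 := by ring
          _ ≤ ⟪F, a - b⟫ := hpair
          _ ≤ ‖F‖ * n := hCS
      exact le_of_mul_le_mul_right h1 hpos
    have hhalf : (0:ℝ) < n / 2 := by positivity
    have h2 : ((n / 2) ^ r * (n / 2)) ^ 2 ≤ ‖F‖ ^ 2 := by
      have := mul_self_le_mul_self (by positivity) hX
      simpa [pow_two] using this
    have e1 : ((n / 2) ^ r * (n / 2)) ^ 2 = (n / 2) ^ (2 * r + 2) := by
      rw [mul_pow, ← Real.rpow_natCast ((n / 2) ^ r) 2, ← Real.rpow_mul hhalf.le,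
        ← Real.rpow_natCast (n / 2) 2, ← Real.rpow_add hhalf]
      norm_num
      ring_nf
    have e2 : (n / 2) ^ (2 * r + 2) = n ^ p / 2 ^ p := by
      have hp' : 2 * r + 2 = p := by rw [hrdef]; ring
      rw [hp', Real.div_rpow hn0 (by norm_num : (0:ℝ) ≤ 2)]
    have h3 : n ^ p / 2 ^ p ≤ ‖F‖ ^ 2 := by rw [← e2, ← e1]; exact h2
    have h2p : (0:ℝ) < 2 ^ p := Real.rpow_pos_of_pos (by norm_num) p
    calc n ^ p = (n ^ p / 2 ^ p) * 2 ^ p := by field_simp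
      _ ≤ ‖F‖ ^ 2 * 2 ^ p := by exact mul_le_mul_of_nonneg_right h3 h2p.le
      _ = 2 ^ p * ‖F‖ ^ 2 := by ring

/-- `x^r - y^r ≤ max r 1 * x^(r-1) * (x - y)` for `0 ≤ y ≤ x`, `0 ≤ r`. -/
lemma rpow_sub_le_max (r x y : ℝ) (hr : 0 ≤ r) (hy : 0 ≤ y) (hxy : y ≤ x) :
    x ^ r - y ^ r ≤ max r 1 * x ^ (r - 1) * (x - y) := by
  have hx : 0 ≤ x := le_trans hy hxy
  rcases eq_or_lt_of_le hx with h0 | hxpos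
  · have hy0 : y = 0 := le_antisymm (h0 ▸ hxy) hy
    simp [← h0, hy0]
  rcases le_total r 1 with hr1 | hr1
  · have hmax : max r 1 = 1 := max_eq_right hr1
    rw [hmax, one_mul]
    have key : x ^ (r - 1) * y ≤ y ^ r := by
      rcases eq_or_lt_of_le hy with h0 | hypos
      · simp [← h0]
        positivity
      · have h1 : x ^ (r - 1) ≤ y ^ (r - 1) :=
          Real.rpow_le_rpow_of_nonpos hypos hxy (by linarith)
        calc x ^ (r - 1) * y ≤ y ^ (r - 1) * y :=
              mul_le_mul_of_nonneg_right h1 hy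
          _ = y ^ r := by
              rw [← Real.rpow_add_one (ne_of_gt hypos)]
              ring_nf
    have hxr : x ^ (r - 1) * x = x ^ r := by
      rw [← Real.rpow_add_one (ne_of_gt hxpos)]; ring_nf
    nlinarith [key, hxr]
  · have hmax : max r 1 = r := max_eq_left hr1
    rw [hmax]
    have hz : -1 ≤ y / x - 1 := by
      have : 0 ≤ y / x := div_nonneg hy hx
      linarith
    have hbern := one_add_mul_self_le_rpow_one_add hz hr1
    have hyx : (1 + (y / x - 1)) = y / x := by ring
    rw [hyx] at hbern
    have hdiv : (y / x) ^ r = y ^ r / x ^ r := Real.div_rpow hy hx r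
    rw [hdiv] at hbern
    have hxr : (0:ℝ) < x ^ r := Real.rpow_pos_of_pos hxpos r
    have hxr1 : x ^ (r - 1) * x = x ^ r := by
      rw [← Real.rpow_add_one (ne_of_gt hxpos)]; ring_nf
    have h2 : x ^ r * (1 + r * (y / x - 1)) ≤ y ^ r := by
      calc x ^ r * (1 + r * (y / x - 1)) ≤ x ^ r * (y ^ r / x ^ r) :=
            mul_le_mul_of_nonneg_left hbern hxr.le
        _ = y ^ r := by field_simp
    have h3 : x ^ r * (r * (y / x)) = r * x ^ (r - 1) * y := by
      rw [← hxr1]; field_simp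
    nlinarith [h2, h3, hxr]

lemma abs_upper_aux (p δ : ℝ) (hp : 2 ≤ p) (hδ : 0 ≤ δ) (a b : V) (hba : ‖b‖ ≤ ‖a‖) :
    ‖((δ + ‖a‖) ^ ((p - 2) / 2)) • a - ((δ + ‖b‖) ^ ((p - 2) / 2)) • b‖
      ≤ (1 + max ((p - 2) / 2) 1) * (δ + ‖a‖ + ‖b‖) ^ ((p - 2) / 2) * ‖a - b‖ := by
  set r : ℝ := (p - 2) / 2 with hrdef
  have hr : 0 ≤ r := by rw [hrdef]; linarith
  set s : ℝ := ‖a‖ with hs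
  set t : ℝ := ‖b‖ with ht
  set n : ℝ := ‖a - b‖ with hn
  have hs0 : 0 ≤ s := norm_nonneg a
  have ht0 : 0 ≤ t := norm_nonneg b
  have hn0 : 0 ≤ n := norm_nonneg _
  by_cases hds : δ + s = 0
  · have ha0 : a = 0 := norm_eq_zero.mp (by linarith)
    have hb0 : b = 0 := norm_eq_zero.mp (by linarith)
    rw [ha0, hb0]
    simp
    positivity
  have hdspos : 0 < δ + s := lt_of_le_of_ne (by linarith) (Ne.symm hds)
  have hmono : (δ + t) ^ r ≤ (δ + s) ^ r :=
    Real.rpow_le_rpow (by linarith) (by linarith) hr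
  have hφs0 : 0 ≤ (δ + s) ^ r := Real.rpow_nonneg (by linarith) r
  have hE0 : 0 ≤ (δ + s + t) := by linarith
  have hEr0 : 0 ≤ (δ + s + t) ^ r := Real.rpow_nonneg hE0 r
  have hFd : ((δ + s) ^ r) • a - ((δ + t) ^ r) • b
      = ((δ + s) ^ r) • (a - b) + ((δ + s) ^ r - (δ + t) ^ r) • b := by
    rw [smul_sub, sub_smul]; abel
  have h1 : ‖((δ + s) ^ r) • a - ((δ + t) ^ r) • b‖
      ≤ (δ + s) ^ r * n + ((δ + s) ^ r - (δ + t) ^ r) * t := by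
    rw [hFd]
    refine (norm_add_le _ _).trans ?_
    rw [norm_smul, norm_smul, Real.norm_eq_abs, Real.norm_eq_abs,
      abs_of_nonneg hφs0, abs_of_nonneg (by linarith)]
  have hB : (δ + s) ^ r - (δ + t) ^ r ≤ max r 1 * (δ + s) ^ (r - 1) * (s - t) := by
    have := rpow_sub_le_max r (δ + s) (δ + t) hr (by linarith) (by linarith)
    calc (δ + s) ^ r - (δ + t) ^ r
        ≤ max r 1 * (δ + s) ^ (r - 1) * ((δ + s) - (δ + t)) := this
      _ = max r 1 * (δ + s) ^ (r - 1) * (s - t) := by ring_nf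
  have hst : s - t ≤ n := by
    calc s - t ≤ ‖a - b‖ := norm_sub_norm_le a b
      _ = n := rfl
  have hr1' : (δ + s) ^ (r - 1) * (δ + s) = (δ + s) ^ r := by
    rw [← Real.rpow_add_one (ne_of_gt hdspos)]; ring_nf
  have hr10 : 0 ≤ (δ + s) ^ (r - 1) := Real.rpow_nonneg (by linarith) _
  have hmax0 : 0 ≤ max r 1 := le_max_of_le_right zero_le_one
  have h2 : ((δ + s) ^ r - (δ + t) ^ r) * t ≤ max r 1 * (δ + s) ^ r * n := by
    calc ((δ + s) ^ r - (δ + t) ^ r) * t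
        ≤ (max r 1 * (δ + s) ^ (r - 1) * (s - t)) * t :=
          mul_le_mul_of_nonneg_right hB ht0
      _ = max r 1 * ((δ + s) ^ (r - 1) * t) * (s - t) := by ring
      _ ≤ max r 1 * ((δ + s) ^ (r - 1) * (δ + s)) * (s - t) := by
          have : (δ + s) ^ (r - 1) * t ≤ (δ + s) ^ (r - 1) * (δ + s) :=
            mul_le_mul_of_nonneg_left (by linarith) hr10
          exact mul_le_mul_of_nonneg_right
            (mul_le_mul_of_nonneg_left this hmax0) (by linarith)
      _ = max r 1 * (δ + s) ^ r * (s - t) := by rw [hr1']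
      _ ≤ max r 1 * (δ + s) ^ r * n :=
          mul_le_mul_of_nonneg_left hst (mul_nonneg hmax0 hφs0)
  have hA : (δ + s) ^ r ≤ (δ + s + t) ^ r :=
    Real.rpow_le_rpow (by linarith) (by linarith) hr
  calc ‖((δ + s) ^ r) • a - ((δ + t) ^ r) • b‖
      ≤ (δ + s) ^ r * n + ((δ + s) ^ r - (δ + t) ^ r) * t := h1
    _ ≤ (δ + s + t) ^ r * n + max r 1 * (δ + s + t) ^ r * n := by
        have h3 : (δ + s) ^ r * n ≤ (δ + s + t) ^ r * n :=
          mul_le_mul_of_nonneg_right hA hn0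
        have h4 : max r 1 * (δ + s) ^ r * n ≤ max r 1 * (δ + s + t) ^ r * n :=
          mul_le_mul_of_nonneg_right (mul_le_mul_of_nonneg_left hA hmax0) hn0
        linarith
    _ = (1 + max r 1) * (δ + s + t) ^ r * n := by ring

lemma abs_upper (p δ : ℝ) (hp : 2 ≤ p) (hδ : 0 ≤ δ) (a b : V) :
    ‖((δ + ‖a‖) ^ ((p - 2) / 2)) • a - ((δ + ‖b‖) ^ ((p - 2) / 2)) • b‖
      ≤ (1 + max ((p - 2) / 2) 1) * (δ + ‖a‖ + ‖b‖) ^ ((p - 2) / 2) * ‖a - b‖ := by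
  rcases le_total ‖b‖ ‖a‖ with h | h
  · exact abs_upper_aux p δ hp hδ a b h
  · have h2 := abs_upper_aux p δ hp hδ b a h
    have e1 : ‖(((δ + ‖a‖) ^ ((p - 2) / 2)) • a - ((δ + ‖b‖) ^ ((p - 2) / 2)) • b : V)‖
        = ‖(((δ + ‖b‖) ^ ((p - 2) / 2)) • b - ((δ + ‖a‖) ^ ((p - 2) / 2)) • a : V)‖ :=
      norm_sub_rev _ _
    have e2 : ‖b - a‖ = ‖a - b‖ := norm_sub_rev b a
    rw [e1]
    rw [e2] at h2
    calc ‖(((δ + ‖b‖) ^ ((p - 2) / 2)) • b - ((δ + ‖a‖) ^ ((p - 2) / 2)) • a : V)‖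
        ≤ (1 + max ((p - 2) / 2) 1) * (δ + ‖b‖ + ‖a‖) ^ ((p - 2) / 2) * ‖a - b‖ := h2
      _ = (1 + max ((p - 2) / 2) 1) * (δ + ‖a‖ + ‖b‖) ^ ((p - 2) / 2) * ‖a - b‖ := by
          ring_nf

end AbstractPointwise

/-! ### Matrix glue -/

noncomputable def mvec {d : ℕ} (A : Matrix (Fin d) (Fin d) ℝ) :
    EuclideanSpace ℝ (Fin d × Fin d) := WithLp.toLp 2 (fun q : Fin d × Fin d => A q.1 q.2)

variable {d : ℕ}

lemma mvec_sub (A B : Matrix (Fin d) (Fin d) ℝ) : mvec (A - B) = mvec A - mvec B := rfl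

lemma mvec_smul (c : ℝ) (A : Matrix (Fin d) (Fin d) ℝ) : mvec (c • A) = c • mvec A := rfl

lemma mdot_eq_inner (A B : Matrix (Fin d) (Fin d) ℝ) :
    mdot A B = inner (𝕜 := ℝ) (mvec A) (mvec B) := by
  rw [mdot, PiLp.inner_apply]
  rw [Fintype.sum_prod_type]
  simp [mvec, RCLike.inner_apply, mul_comm]

lemma mnorm_eq (A : Matrix (Fin d) (Fin d) ℝ) : mnorm A = ‖mvec A‖ := by
  rw [mnorm, mdot_eq_inner, ← norm_eq_sqrt_real_inner]

lemma mnorm_nonneg (A : Matrix (Fin d) (Fin d) ℝ) : 0 ≤ mnorm A := by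
  rw [mnorm_eq]; exact norm_nonneg _

lemma mnorm_sub_le (A B : Matrix (Fin d) (Fin d) ℝ) : mnorm (A - B) ≤ mnorm A + mnorm B := by
  rw [mnorm_eq, mnorm_eq, mnorm_eq, mvec_sub]; exact norm_sub_le _ _

lemma mnorm_le_add_sub (A B : Matrix (Fin d) (Fin d) ℝ) :
    mnorm B ≤ mnorm A + mnorm (A - B) := by
  rw [mnorm_eq, mnorm_eq, mnorm_eq, mvec_sub]
  have h : (mvec B : EuclideanSpace ℝ (Fin d × Fin d)) = mvec A - (mvec A - mvec B) := by abel
  calc ‖(mvec B : EuclideanSpace ℝ (Fin d × Fin d))‖ = ‖mvec A - (mvec A - mvec B)‖ := by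
        rw [← h]
    _ ≤ ‖mvec A‖ + ‖mvec A - mvec B‖ := norm_sub_le _ _

lemma msym_eq_self {P : Matrix (Fin d) (Fin d) ℝ} (h : Pᵀ = P) : msym P = P := by
  rw [msym, h, ← two_smul ℝ P, smul_smul]
  norm_num

lemma Fmap_eq (p δ : ℝ) {P : Matrix (Fin d) (Fin d) ℝ} (h : Pᵀ = P) :
    Fmap p δ P = ((δ + mnorm P) ^ ((p - 2) / 2)) • P := by
  rw [Fmap, msym_eq_self h]

lemma mnorm_Fmap_sub (p δ : ℝ) {P Q : Matrix (Fin d) (Fin d) ℝ} (hP : Pᵀ = P) (hQ : Qᵀ = Q) :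
    mnorm (Fmap p δ P - Fmap p δ Q)
      = ‖((δ + ‖mvec P‖) ^ ((p - 2) / 2)) • mvec P
          - ((δ + ‖mvec Q‖) ^ ((p - 2) / 2)) • mvec Q‖ := by
  rw [Fmap_eq p δ hP, Fmap_eq p δ hQ, mnorm_eq, mvec_sub, mvec_smul, mvec_smul,
    mnorm_eq P, mnorm_eq Q]

lemma matLower (p δ : ℝ) (hp : 2 ≤ p) (hδ : 0 ≤ δ) {P Q : Matrix (Fin d) (Fin d) ℝ}
    (hP : Pᵀ = P) (hQ : Qᵀ = Q) :
    mnorm (P - Q) ^ p ≤ 2 ^ p * mnorm (Fmap p δ P - Fmap p δ Q) ^ (2:ℝ) := by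
  rw [mnorm_Fmap_sub p δ hP hQ, mnorm_eq, mvec_sub]
  exact abs_lower p δ hp hδ (mvec P) (mvec Q)
    (pairing_lower ((p - 2) / 2) δ (by linarith) hδ (mvec P) (mvec Q))

lemma matUpper_sq (p δ : ℝ) (hp : 2 ≤ p) (hδ : 0 ≤ δ) {P Q : Matrix (Fin d) (Fin d) ℝ}
    (hP : Pᵀ = P) (hQ : Qᵀ = Q) :
    mnorm (Fmap p δ P - Fmap p δ Q) ^ (2:ℝ)
      ≤ (1 + max ((p - 2) / 2) 1) ^ 2
          * ((δ + mnorm P + mnorm Q) ^ (p - 2) * mnorm (P - Q) ^ (2:ℝ)) := by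
  have hup := abs_upper p δ hp hδ (mvec P) (mvec Q)
  rw [mnorm_Fmap_sub p δ hP hQ, mnorm_eq P, mnorm_eq Q, mnorm_eq (P - Q), mvec_sub]
  set a := mvec P
  set b := mvec Q
  set r : ℝ := (p - 2) / 2 with hrdef
  set c : ℝ := 1 + max r 1 with hcdef
  set E : ℝ := δ + ‖a‖ + ‖b‖ with hEdef
  set n : ℝ := ‖a - b‖ with hn
  set X : ℝ := ‖((δ + ‖a‖) ^ r) • a - ((δ + ‖b‖) ^ r) • b‖ with hX
  have hX0 : 0 ≤ X := norm_nonneg _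
  have hn0 : 0 ≤ n := norm_nonneg _
  have hE0 : 0 ≤ E := by
    have := norm_nonneg a; have := norm_nonneg b; rw [hEdef]; linarith
  have hc0 : 0 ≤ c := by
    have : (1:ℝ) ≤ max r 1 := le_max_right _ _
    rw [hcdef]; linarith
  rw [Real.rpow_two, Real.rpow_two]
  have h1 : X ^ 2 ≤ (c * E ^ r * n) ^ 2 := by
    have hrhs0 : 0 ≤ c * E ^ r * n :=
      mul_nonneg (mul_nonneg hc0 (Real.rpow_nonneg hE0 r)) hn0
    have := mul_self_le_mul_self hX0 hup
    simpa [pow_two] using this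
  have e2 : (E ^ r) ^ 2 = E ^ (p - 2) := by
    rw [← Real.rpow_natCast (E ^ r) 2, ← Real.rpow_mul hE0]
    norm_num
    rw [hrdef]
    ring_nf
  calc X ^ 2 ≤ (c * E ^ r * n) ^ 2 := h1
    _ = c ^ 2 * ((E ^ r) ^ 2 * n ^ 2) := by ring
    _ = c ^ 2 * (E ^ (p - 2) * n ^ 2) := by rw [e2]

lemma matUpper_p (p δ : ℝ) (hp : 2 ≤ p) (hδ : 0 ≤ δ) {P Q : Matrix (Fin d) (Fin d) ℝ}
    (hP : Pᵀ = P) (hQ : Qᵀ = Q) :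
    mnorm (Fmap p δ P - Fmap p δ Q) ^ (2:ℝ)
      ≤ (1 + max ((p - 2) / 2) 1) ^ 2 * (δ + mnorm P + mnorm Q) ^ p := by
  refine (matUpper_sq p δ hp hδ hP hQ).trans ?_
  set M : ℝ := δ + mnorm P + mnorm Q with hMdef
  have hM0 : 0 ≤ M := by
    have := mnorm_nonneg P; have := mnorm_nonneg Q; rw [hMdef]; linarith
  have hc0 : (0:ℝ) ≤ (1 + max ((p - 2) / 2) 1) ^ 2 := sq_nonneg _
  have hd : mnorm (P - Q) ≤ M := by
    have := mnorm_sub_le P Q; rw [hMdef]; linarith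
  have h1 : mnorm (P - Q) ^ (2:ℝ) ≤ M ^ (2:ℝ) :=
    Real.rpow_le_rpow (mnorm_nonneg _) hd (by norm_num)
  have h2 : M ^ (p - 2) * M ^ (2:ℝ) = M ^ p := by
    have hpe : p - 2 + 2 = p := by ring
    rw [← Real.rpow_add' hM0 (by rw [hpe]; positivity)]
    rw [hpe]
  have h3 : M ^ (p - 2) * mnorm (P - Q) ^ (2:ℝ) ≤ M ^ p := by
    calc M ^ (p - 2) * mnorm (P - Q) ^ (2:ℝ) ≤ M ^ (p - 2) * M ^ (2:ℝ) :=
          mul_le_mul_of_nonneg_left h1 (Real.rpow_nonneg hM0 _)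
      _ = M ^ p := h2
  exact mul_le_mul_of_nonneg_left h3 hc0

/-! ### Measure-theoretic helpers -/

section MeasureHelpers

variable {α : Type*} [MeasurableSpace α] {μ : Measure α}

lemma rpow_add_le_two_rpow (x y q : ℝ) (hx : 0 ≤ x) (hy : 0 ≤ y) (hq : 0 ≤ q) :
    (x + y) ^ q ≤ 2 ^ q * (x ^ q + y ^ q) := by
  have h1 : x + y ≤ 2 * max x y := by
    rcases max_cases x y with ⟨he, h⟩ | ⟨he, h⟩ <;> rw [he] <;> linarith
  have hmax0 : 0 ≤ max x y := le_max_of_le_left hx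
  calc (x + y) ^ q ≤ (2 * max x y) ^ q :=
        Real.rpow_le_rpow (by linarith) h1 hq
    _ = 2 ^ q * (max x y) ^ q := Real.mul_rpow (by norm_num) hmax0
    _ ≤ 2 ^ q * (x ^ q + y ^ q) := by
        have hb : (max x y) ^ q ≤ x ^ q + y ^ q := by
          rcases max_cases x y with ⟨he, _⟩ | ⟨he, _⟩ <;> rw [he]
          · have := Real.rpow_nonneg hy q; linarith
          · have := Real.rpow_nonneg hx q; linarith
        exact mul_le_mul_of_nonneg_left hb (Real.rpow_nonneg (by norm_num) q)

lemma memLp_of_integrable_rpow {f : α → ℝ} (hf : AEStronglyMeasurable f μ)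
    (hnn : ∀ x, 0 ≤ f x) {r : ℝ} (hr : 0 < r)
    (hi : Integrable (fun x => f x ^ r) μ) : MemLp f (ENNReal.ofReal r) μ := by
  have hq0 : ENNReal.ofReal r ≠ 0 := by
    simp [ENNReal.ofReal_eq_zero, not_le, hr]
  have hqt : ENNReal.ofReal r ≠ ⊤ := ENNReal.ofReal_ne_top
  have h := memLp_norm_rpow_iff (p := ENNReal.ofReal r) (q := ENNReal.ofReal r) hf hq0 hqt
  rw [ENNReal.div_self hq0 hqt, memLp_one_iff_integrable] at h
  apply h.mp
  have he : (fun x => ‖f x‖ ^ (ENNReal.ofReal r).toReal) = fun x => f x ^ r := by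
    funext x
    rw [Real.norm_eq_abs, abs_of_nonneg (hnn x), ENNReal.toReal_ofReal hr.le]
  rw [he]
  exact hi

lemma rawMinkowski {q : ℝ} (hq : 1 ≤ q) {f g : α → ℝ}
    (hfm : AEStronglyMeasurable f μ) (hgm : AEStronglyMeasurable g μ)
    (hf0 : ∀ x, 0 ≤ f x) (hg0 : ∀ x, 0 ≤ g x)
    (hfi : Integrable (fun x => f x ^ q) μ) (hgi : Integrable (fun x => g x ^ q) μ) :
    (∫ x, (f x + g x) ^ q ∂μ) ^ (1/q)
      ≤ (∫ x, f x ^ q ∂μ) ^ (1/q) + (∫ x, g x ^ q ∂μ) ^ (1/q) := by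
  have hq0 : 0 < q := lt_of_lt_of_le one_pos hq
  have hMf := memLp_of_integrable_rpow hfm hf0 hq0 hfi
  have hMg := memLp_of_integrable_rpow hgm hg0 hq0 hgi
  have hMfg : MemLp (f + g) (ENNReal.ofReal q) μ := hMf.add hMg
  have h0 : ENNReal.ofReal q ≠ 0 := by simp [ENNReal.ofReal_eq_zero, not_le, hq0]
  have ht : ENNReal.ofReal q ≠ ⊤ := ENNReal.ofReal_ne_top
  have htr : (ENNReal.ofReal q).toReal = q := ENNReal.toReal_ofReal hq0.le
  have ef := hMf.eLpNorm_eq_integral_rpow_norm h0 ht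
  have eg := hMg.eLpNorm_eq_integral_rpow_norm h0 ht
  have efg := hMfg.eLpNorm_eq_integral_rpow_norm h0 ht
  rw [htr] at ef eg efg
  have hcf : (∫ x, ‖f x‖ ^ q ∂μ) = ∫ x, f x ^ q ∂μ := by
    refine integral_congr_ae (Filter.Eventually.of_forall fun x => ?_)
    simp [Real.norm_eq_abs, abs_of_nonneg (hf0 x)]
  have hcg : (∫ x, ‖g x‖ ^ q ∂μ) = ∫ x, g x ^ q ∂μ := by
    refine integral_congr_ae (Filter.Eventually.of_forall fun x => ?_)
    simp [Real.norm_eq_abs, abs_of_nonneg (hg0 x)]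
  have hcfg : (∫ x, ‖(f + g) x‖ ^ q ∂μ) = ∫ x, (f x + g x) ^ q ∂μ := by
    refine integral_congr_ae (Filter.Eventually.of_forall fun x => ?_)
    simp [Pi.add_apply, Real.norm_eq_abs,
      abs_of_nonneg (add_nonneg (hf0 x) (hg0 x))]
  rw [hcf] at ef; rw [hcg] at eg; rw [hcfg] at efg
  have hq1 : (1 : ENNReal) ≤ ENNReal.ofReal q := by
    rw [show (1 : ENNReal) = ENNReal.ofReal 1 by simp]
    exact ENNReal.ofReal_le_ofReal hq
  have htri := eLpNorm_add_le (p := ENNReal.ofReal q) hMf.1 hMg.1 hq1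
  rw [ef, eg, efg] at htri
  have hintf0 : 0 ≤ (∫ x, f x ^ q ∂μ) ^ q⁻¹ :=
    Real.rpow_nonneg (integral_nonneg fun x => Real.rpow_nonneg (hf0 x) q) _
  have hintg0 : 0 ≤ (∫ x, g x ^ q ∂μ) ^ q⁻¹ :=
    Real.rpow_nonneg (integral_nonneg fun x => Real.rpow_nonneg (hg0 x) q) _
  rw [← ENNReal.ofReal_add hintf0 hintg0] at htri
  have := (ENNReal.ofReal_le_ofReal_iff (add_nonneg hintf0 hintg0)).mp htri
  simpa [one_div] using this

end MeasureHelpers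

/-! ### Measurability -/

section Measurability

variable {α : Type*} [MeasurableSpace α] {d : ℕ}

lemma measurable_mnorm {A : α → Matrix (Fin d) (Fin d) ℝ}
    (hA : ∀ i j, Measurable fun x => A x i j) :
    Measurable fun x => mnorm (A x) := by
  have h : Measurable fun x => mdot (A x) (A x) := by
    simp only [mdot]
    exact Finset.measurable_sum _ fun i _ =>
      Finset.measurable_sum _ fun j _ => (hA i j).mul (hA i j)
  simp only [mnorm]
  exact h.sqrt

lemma measurable_sub_entries {A B : α → Matrix (Fin d) (Fin d) ℝ}
    (hA : ∀ i j, Measurable fun x => A x i j) (hB : ∀ i j, Measurable fun x => B x i j) :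
    ∀ i j, Measurable fun x => (A x - B x) i j := by
  intro i j
  have he : (fun x => (A x - B x) i j) = fun x => A x i j - B x i j := by
    funext x; simp [Matrix.sub_apply]
  rw [he]
  exact (hA i j).sub (hB i j)

lemma measurable_msym_entries {A : α → Matrix (Fin d) (Fin d) ℝ}
    (hA : ∀ i j, Measurable fun x => A x i j) :
    ∀ i j, Measurable fun x => msym (A x) i j := by
  intro i j
  have he : (fun x => msym (A x) i j) = fun x => (2⁻¹ : ℝ) * (A x i j + A x j i) := by
    funext x
    simp [msym, Matrix.add_apply, Matrix.smul_apply, Matrix.transpose_apply, smul_eq_mul]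
  rw [he]
  exact ((hA i j).add (hA j i)).const_mul _

lemma measurable_Fmap_entries (p δ : ℝ) (hp : 2 ≤ p) {A : α → Matrix (Fin d) (Fin d) ℝ}
    (hA : ∀ i j, Measurable fun x => A x i j) :
    ∀ i j, Measurable fun x => Fmap p δ (A x) i j := by
  intro i j
  have hr : (0:ℝ) ≤ (p - 2) / 2 := by linarith
  have he : (fun x => Fmap p δ (A x) i j)
      = fun x => ((δ + mnorm (msym (A x))) ^ ((p - 2) / 2)) * msym (A x) i j := by
    funext x
    simp [Fmap, Matrix.smul_apply, smul_eq_mul]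
  rw [he]
  exact (((Real.continuous_rpow_const hr).measurable).comp
    (measurable_const.add (measurable_mnorm (measurable_msym_entries hA)))).mul
    (measurable_msym_entries hA i j)

lemma measurable_rpow_comp {f : α → ℝ} (hf : Measurable f) {q : ℝ} (hq : 0 ≤ q) :
    Measurable fun x => f x ^ q :=
  ((Real.continuous_rpow_const hq).measurable).comp hf

end Measurability

end Stmt13Aux

/-- Let `p ∈ [2,∞)` and `δ ∈ [0,1]`. There are constants `c₁, c₂ > 0` depending only on
`p` such that for every bounded measurable `Ω ⊂ ℝᵈ` of positive measure and all
measurable symmetric-matrix-valued `G, H ∈ Lᵖ(Ω)`: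
`‖G - H‖ₚᵖ ≤ c₁ * ‖F∘G - F∘H‖₂²` and
`‖F∘G - F∘H‖₂² ≤ c₂ * (K + ‖G‖ₚ + ‖G - H‖ₚ)^(p-2) * ‖G - H‖ₚ²`, where `K = δ * |Ω|^(1/p)`. -/
theorem stmt13 (p δ : ℝ) (hp : 2 ≤ p) (hδ0 : 0 ≤ δ) (hδ1 : δ ≤ 1) :
    ∃ c₁ : ℝ, 0 < c₁ ∧ ∃ c₂ : ℝ, 0 < c₂ ∧
      ∀ (d : ℕ) (Ω : Set (Fin d → ℝ)),
        MeasurableSet Ω → Bornology.IsBounded Ω → 0 < volume Ω →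
        ∀ G H : (Fin d → ℝ) → Matrix (Fin d) (Fin d) ℝ,
          (∀ i j, Measurable fun x => G x i j) →
          (∀ i j, Measurable fun x => H x i j) →
          (∀ x ∈ Ω, (G x)ᵀ = G x) → (∀ x ∈ Ω, (H x)ᵀ = H x) →
          IntegrableOn (fun x => mnorm (G x) ^ p) Ω volume →
          IntegrableOn (fun x => mnorm (H x) ^ p) Ω volume →
          ((∫ x in Ω, mnorm (G x - H x) ^ p) ^ ((1:ℝ)/p)) ^ p
            ≤ c₁ * ((∫ x in Ω, mnorm (Fmap p δ (G x) - Fmap p δ (H x)) ^ (2:ℝ))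
                      ^ ((1:ℝ)/2)) ^ (2:ℝ) ∧
          ((∫ x in Ω, mnorm (Fmap p δ (G x) - Fmap p δ (H x)) ^ (2:ℝ)) ^ ((1:ℝ)/2))
              ^ (2:ℝ)
            ≤ c₂ * (δ * (volume Ω).toReal ^ ((1:ℝ)/p)
                    + (∫ x in Ω, mnorm (G x) ^ p) ^ ((1:ℝ)/p)
                    + (∫ x in Ω, mnorm (G x - H x) ^ p) ^ ((1:ℝ)/p)) ^ (p - 2)
                * ((∫ x in Ω, mnorm (G x - H x) ^ p) ^ ((1:ℝ)/p)) ^ (2:ℝ) := by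
  classical
  have hp0 : (0:ℝ) < p := by linarith
  have hp0' : p ≠ 0 := ne_of_gt hp0
  set Cq : ℝ := (1 + max ((p - 2) / 2) 1) ^ 2 with hCqdef
  have hCq0 : 0 < Cq := by
    have h1 : (1:ℝ) ≤ max ((p - 2) / 2) 1 := le_max_right _ _
    have h2 : (0:ℝ) < 1 + max ((p - 2) / 2) 1 := by linarith
    exact pow_pos h2 2
  have h2p0 : (0:ℝ) < 2 ^ p := Real.rpow_pos_of_pos (by norm_num) p
  have h2p20 : (0:ℝ) < 2 ^ (p - 2) := Real.rpow_pos_of_pos (by norm_num) _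
  refine ⟨2 ^ p, h2p0, Cq * 2 ^ (p - 2), mul_pos hCq0 h2p20, ?_⟩
  intro d Ω hΩm hΩb hΩpos G H hGm hHm hGsym hHsym hGint hHint
  have hΩfin : volume Ω < ⊤ := hΩb.measure_lt_top
  -- measurability
  have hgN : Measurable fun x => mnorm (G x) := Stmt13Aux.measurable_mnorm hGm
  have hhN : Measurable fun x => mnorm (H x) := Stmt13Aux.measurable_mnorm hHm
  have hdN : Measurable fun x => mnorm (G x - H x) :=
    Stmt13Aux.measurable_mnorm (Stmt13Aux.measurable_sub_entries hGm hHm)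
  have hfN : Measurable fun x => mnorm (Fmap p δ (G x) - Fmap p δ (H x)) :=
    Stmt13Aux.measurable_mnorm (Stmt13Aux.measurable_sub_entries
      (Stmt13Aux.measurable_Fmap_entries p δ hp hGm)
      (Stmt13Aux.measurable_Fmap_entries p δ hp hHm))
  have hMmeas : Measurable fun x => δ + mnorm (G x) + mnorm (H x) :=
    (measurable_const.add hgN).add hhN
  -- pointwise nonnegativity
  have hg0 : ∀ x, (0:ℝ) ≤ mnorm (G x) := fun x => Stmt13Aux.mnorm_nonneg _
  have hh0 : ∀ x, (0:ℝ) ≤ mnorm (H x) := fun x => Stmt13Aux.mnorm_nonneg _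
  have hd0 : ∀ x, (0:ℝ) ≤ mnorm (G x - H x) := fun x => Stmt13Aux.mnorm_nonneg _
  have hM0 : ∀ x, (0:ℝ) ≤ δ + mnorm (G x) + mnorm (H x) := by
    intro x; have := hg0 x; have := hh0 x; linarith
  -- integrability facts
  have hDint : IntegrableOn (fun x => mnorm (G x - H x) ^ p) Ω volume := by
    refine Integrable.mono' ((hGint.add hHint).const_mul (2 ^ p))
      ((Stmt13Aux.measurable_rpow_comp hdN hp0.le).aestronglyMeasurable)
      (Filter.Eventually.of_forall fun x => ?_)
    rw [Real.norm_eq_abs, abs_of_nonneg (Real.rpow_nonneg (hd0 x) p)]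
    calc mnorm (G x - H x) ^ p ≤ (mnorm (G x) + mnorm (H x)) ^ p :=
          Real.rpow_le_rpow (hd0 x) (Stmt13Aux.mnorm_sub_le _ _) hp0.le
      _ ≤ 2 ^ p * (mnorm (G x) ^ p + mnorm (H x) ^ p) :=
          Stmt13Aux.rpow_add_le_two_rpow _ _ p (hg0 x) (hh0 x) hp0.le
  have hconstint : IntegrableOn (fun _ => δ ^ p) Ω volume :=
    integrableOn_const hΩfin.ne
  have h2gint : IntegrableOn (fun x => (2 * mnorm (G x)) ^ p) Ω volume := by
    have he : (fun x => (2 * mnorm (G x)) ^ p) = fun x => 2 ^ p * mnorm (G x) ^ p := by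
      funext x; exact Real.mul_rpow (by norm_num) (hg0 x)
    rw [he]; exact hGint.const_mul _
  have hAint : IntegrableOn (fun x => (δ + 2 * mnorm (G x)) ^ p) Ω volume := by
    refine Integrable.mono' ((hconstint.add h2gint).const_mul (2 ^ p))
      ((Stmt13Aux.measurable_rpow_comp (measurable_const.add (hgN.const_mul 2))
        hp0.le).aestronglyMeasurable)
      (Filter.Eventually.of_forall fun x => ?_)
    have hnn : (0:ℝ) ≤ δ + 2 * mnorm (G x) := by have := hg0 x; linarith
    rw [Real.norm_eq_abs, abs_of_nonneg (Real.rpow_nonneg hnn p)]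
    exact Stmt13Aux.rpow_add_le_two_rpow _ _ p hδ0 (by have := hg0 x; linarith) hp0.le
  have hNint : IntegrableOn
      (fun x => ((δ + 2 * mnorm (G x)) + mnorm (G x - H x)) ^ p) Ω volume := by
    refine Integrable.mono' ((hAint.add hDint).const_mul (2 ^ p))
      ((Stmt13Aux.measurable_rpow_comp
        ((measurable_const.add (hgN.const_mul 2)).add hdN) hp0.le).aestronglyMeasurable)
      (Filter.Eventually.of_forall fun x => ?_)
    have hnn : (0:ℝ) ≤ (δ + 2 * mnorm (G x)) + mnorm (G x - H x) := by
      have := hg0 x; have := hd0 x; linarith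
    rw [Real.norm_eq_abs, abs_of_nonneg (Real.rpow_nonneg hnn p)]
    exact Stmt13Aux.rpow_add_le_two_rpow _ _ p
      (by have := hg0 x; linarith) (hd0 x) hp0.le
  have hMleN : ∀ x, (δ + mnorm (G x) + mnorm (H x))
      ≤ (δ + 2 * mnorm (G x)) + mnorm (G x - H x) := by
    intro x
    have := Stmt13Aux.mnorm_le_add_sub (G x) (H x)
    linarith
  have hMint : IntegrableOn (fun x => (δ + mnorm (G x) + mnorm (H x)) ^ p) Ω volume := by
    refine Integrable.mono' hNint
      ((Stmt13Aux.measurable_rpow_comp hMmeas hp0.le).aestronglyMeasurable)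
      (Filter.Eventually.of_forall fun x => ?_)
    rw [Real.norm_eq_abs, abs_of_nonneg (Real.rpow_nonneg (hM0 x) p)]
    exact Real.rpow_le_rpow (hM0 x) (hMleN x) hp0.le
  have hFint : IntegrableOn
      (fun x => mnorm (Fmap p δ (G x) - Fmap p δ (H x)) ^ (2:ℝ)) Ω volume := by
    refine Integrable.mono' (hMint.const_mul Cq)
      ((Stmt13Aux.measurable_rpow_comp hfN (by norm_num)).aestronglyMeasurable) ?_
    rw [MeasureTheory.ae_restrict_iff' hΩm]
    refine Filter.Eventually.of_forall fun x hx => ?_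
    rw [Real.norm_eq_abs,
      abs_of_nonneg (Real.rpow_nonneg (Stmt13Aux.mnorm_nonneg _) _)]
    exact Stmt13Aux.matUpper_p p δ hp hδ0 (hGsym x hx) (hHsym x hx)
  have hMD2 : ∀ x, (δ + mnorm (G x) + mnorm (H x)) ^ (p - 2)
        * mnorm (G x - H x) ^ (2:ℝ)
      ≤ (δ + mnorm (G x) + mnorm (H x)) ^ p := by
    intro x
    have hdM : mnorm (G x - H x) ≤ δ + mnorm (G x) + mnorm (H x) := by
      have := Stmt13Aux.mnorm_sub_le (G x) (H x); linarith
    have h1 : mnorm (G x - H x) ^ (2:ℝ)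
        ≤ (δ + mnorm (G x) + mnorm (H x)) ^ (2:ℝ) :=
      Real.rpow_le_rpow (hd0 x) hdM (by norm_num)
    have h2 : (δ + mnorm (G x) + mnorm (H x)) ^ (p - 2)
          * (δ + mnorm (G x) + mnorm (H x)) ^ (2:ℝ)
        = (δ + mnorm (G x) + mnorm (H x)) ^ p := by
      have hpe : p - 2 + 2 = p := by ring
      rw [← Real.rpow_add' (hM0 x) (by rw [hpe]; exact hp0')]
      rw [hpe]
    calc (δ + mnorm (G x) + mnorm (H x)) ^ (p - 2) * mnorm (G x - H x) ^ (2:ℝ)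
        ≤ (δ + mnorm (G x) + mnorm (H x)) ^ (p - 2)
            * (δ + mnorm (G x) + mnorm (H x)) ^ (2:ℝ) :=
          mul_le_mul_of_nonneg_left h1 (Real.rpow_nonneg (hM0 x) _)
      _ = (δ + mnorm (G x) + mnorm (H x)) ^ p := h2
  have hfgint : IntegrableOn
      (fun x => (δ + mnorm (G x) + mnorm (H x)) ^ (p - 2)
        * mnorm (G x - H x) ^ (2:ℝ)) Ω volume := by
    refine Integrable.mono' hMint
      (((Stmt13Aux.measurable_rpow_comp hMmeas (by linarith)).mul
        (Stmt13Aux.measurable_rpow_comp hdN (by norm_num))).aestronglyMeasurable)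
      (Filter.Eventually.of_forall fun x => ?_)
    rw [Real.norm_eq_abs, abs_of_nonneg
      (mul_nonneg (Real.rpow_nonneg (hM0 x) _) (Real.rpow_nonneg (hd0 x) _))]
    exact hMD2 x
  -- nonnegativity of integrals
  have hID0 : (0:ℝ) ≤ ∫ x in Ω, mnorm (G x - H x) ^ p :=
    integral_nonneg fun x => Real.rpow_nonneg (hd0 x) p
  have hJF0 : (0:ℝ) ≤ ∫ x in Ω, mnorm (Fmap p δ (G x) - Fmap p δ (H x)) ^ (2:ℝ) :=
    integral_nonneg fun x => Real.rpow_nonneg (Stmt13Aux.mnorm_nonneg _) _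
  have hIG0 : (0:ℝ) ≤ ∫ x in Ω, mnorm (G x) ^ p :=
    integral_nonneg fun x => Real.rpow_nonneg (hg0 x) p
  have hIM0 : (0:ℝ) ≤ ∫ x in Ω, (δ + mnorm (G x) + mnorm (H x)) ^ p :=
    integral_nonneg fun x => Real.rpow_nonneg (hM0 x) p
  have hIDeq : ((∫ x in Ω, mnorm (G x - H x) ^ p) ^ ((1:ℝ)/p)) ^ p
      = ∫ x in Ω, mnorm (G x - H x) ^ p := by
    rw [← Real.rpow_mul hID0, one_div, inv_mul_cancel₀ hp0', Real.rpow_one]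
  have hJFeq : ((∫ x in Ω, mnorm (Fmap p δ (G x) - Fmap p δ (H x)) ^ (2:ℝ))
        ^ ((1:ℝ)/2)) ^ (2:ℝ)
      = ∫ x in Ω, mnorm (Fmap p δ (G x) - Fmap p δ (H x)) ^ (2:ℝ) := by
    rw [← Real.rpow_mul hJF0, one_div,
      inv_mul_cancel₀ (by norm_num : (2:ℝ) ≠ 0), Real.rpow_one]
  -- the first inequality
  have hfirst : (∫ x in Ω, mnorm (G x - H x) ^ p)
      ≤ 2 ^ p * ∫ x in Ω, mnorm (Fmap p δ (G x) - Fmap p δ (H x)) ^ (2:ℝ) := by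
    calc (∫ x in Ω, mnorm (G x - H x) ^ p)
        ≤ ∫ x in Ω, 2 ^ p * mnorm (Fmap p δ (G x) - Fmap p δ (H x)) ^ (2:ℝ) :=
          setIntegral_mono_on hDint (hFint.const_mul _) hΩm
            (fun x hx => Stmt13Aux.matLower p δ hp hδ0 (hGsym x hx) (hHsym x hx))
      _ = 2 ^ p * ∫ x in Ω, mnorm (Fmap p δ (G x) - Fmap p δ (H x)) ^ (2:ℝ) :=
          integral_const_mul _ _
  -- step 1 of the second inequality
  have hstep1 : (∫ x in Ω, mnorm (Fmap p δ (G x) - Fmap p δ (H x)) ^ (2:ℝ))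
      ≤ Cq * ∫ x in Ω, (δ + mnorm (G x) + mnorm (H x)) ^ (p - 2)
          * mnorm (G x - H x) ^ (2:ℝ) := by
    calc (∫ x in Ω, mnorm (Fmap p δ (G x) - Fmap p δ (H x)) ^ (2:ℝ))
        ≤ ∫ x in Ω, Cq * ((δ + mnorm (G x) + mnorm (H x)) ^ (p - 2)
            * mnorm (G x - H x) ^ (2:ℝ)) :=
          setIntegral_mono_on hFint (hfgint.const_mul _) hΩm
            (fun x hx => Stmt13Aux.matUpper_sq p δ hp hδ0 (hGsym x hx) (hHsym x hx))
      _ = Cq * ∫ x in Ω, (δ + mnorm (G x) + mnorm (H x)) ^ (p - 2)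
            * mnorm (G x - H x) ^ (2:ℝ) := integral_const_mul _ _
  -- Minkowski chain
  have hVnn : (0:ℝ) ≤ (volume Ω).toReal := ENNReal.toReal_nonneg
  have hK0 : (0:ℝ) ≤ δ * (volume Ω).toReal ^ ((1:ℝ)/p) :=
    mul_nonneg hδ0 (Real.rpow_nonneg hVnn _)
  have hIGr0 : (0:ℝ) ≤ (∫ x in Ω, mnorm (G x) ^ p) ^ ((1:ℝ)/p) :=
    Real.rpow_nonneg hIG0 _
  have hIDr0 : (0:ℝ) ≤ (∫ x in Ω, mnorm (G x - H x) ^ p) ^ ((1:ℝ)/p) :=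
    Real.rpow_nonneg hID0 _
  have hmink1 : (∫ x in Ω, (δ + 2 * mnorm (G x)) ^ p) ^ ((1:ℝ)/p)
      ≤ (∫ x in Ω, (δ:ℝ) ^ p) ^ ((1:ℝ)/p)
        + (∫ x in Ω, (2 * mnorm (G x)) ^ p) ^ ((1:ℝ)/p) :=
    Stmt13Aux.rawMinkowski (by linarith : (1:ℝ) ≤ p) (f := fun _ => δ) (g := fun x => 2 * mnorm (G x))
      aestronglyMeasurable_const (hgN.const_mul 2).aestronglyMeasurable
      (fun _ => hδ0) (fun x => by show (0:ℝ) ≤ 2 * mnorm (G x); have := hg0 x; linarith)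
      hconstint h2gint
  have hmink2 : (∫ x in Ω, ((δ + 2 * mnorm (G x)) + mnorm (G x - H x)) ^ p) ^ ((1:ℝ)/p)
      ≤ (∫ x in Ω, (δ + 2 * mnorm (G x)) ^ p) ^ ((1:ℝ)/p)
        + (∫ x in Ω, mnorm (G x - H x) ^ p) ^ ((1:ℝ)/p) :=
    Stmt13Aux.rawMinkowski (by linarith : (1:ℝ) ≤ p) (f := fun x => δ + 2 * mnorm (G x))
      (g := fun x => mnorm (G x - H x))
      (measurable_const.add (hgN.const_mul 2)).aestronglyMeasurable
      hdN.aestronglyMeasurable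
      (fun x => by show (0:ℝ) ≤ δ + 2 * mnorm (G x); have := hg0 x; linarith) hd0 hAint hDint
  have hconsteval : (∫ x in Ω, (δ:ℝ) ^ p) ^ ((1:ℝ)/p)
      = δ * (volume Ω).toReal ^ ((1:ℝ)/p) := by
    rw [setIntegral_const, smul_eq_mul, measureReal_def,
      Real.mul_rpow hVnn (Real.rpow_nonneg hδ0 p), ← Real.rpow_mul hδ0,
      mul_one_div_cancel hp0', Real.rpow_one, mul_comm]
  have h2geval : (∫ x in Ω, (2 * mnorm (G x)) ^ p) ^ ((1:ℝ)/p)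
      = 2 * (∫ x in Ω, mnorm (G x) ^ p) ^ ((1:ℝ)/p) := by
    have he : (fun x => (2 * mnorm (G x)) ^ p) = fun x => 2 ^ p * mnorm (G x) ^ p := by
      funext x; exact Real.mul_rpow (by norm_num) (hg0 x)
    rw [he, integral_const_mul,
      Real.mul_rpow h2p0.le hIG0, ← Real.rpow_mul (by norm_num : (0:ℝ) ≤ 2),
      mul_one_div_cancel hp0', Real.rpow_one]
  have hMN : (∫ x in Ω, (δ + mnorm (G x) + mnorm (H x)) ^ p)
      ≤ ∫ x in Ω, ((δ + 2 * mnorm (G x)) + mnorm (G x - H x)) ^ p :=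
    setIntegral_mono_on hMint hNint hΩm
      (fun x _ => Real.rpow_le_rpow (hM0 x) (hMleN x) hp0.le)
  have hMT : (∫ x in Ω, (δ + mnorm (G x) + mnorm (H x)) ^ p) ^ ((1:ℝ)/p)
      ≤ 2 * (δ * (volume Ω).toReal ^ ((1:ℝ)/p)
          + (∫ x in Ω, mnorm (G x) ^ p) ^ ((1:ℝ)/p)
          + (∫ x in Ω, mnorm (G x - H x) ^ p) ^ ((1:ℝ)/p)) := by
    have h1 : (∫ x in Ω, (δ + mnorm (G x) + mnorm (H x)) ^ p) ^ ((1:ℝ)/p)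
        ≤ (∫ x in Ω, ((δ + 2 * mnorm (G x)) + mnorm (G x - H x)) ^ p) ^ ((1:ℝ)/p) :=
      Real.rpow_le_rpow hIM0 hMN (by positivity)
    rw [hconsteval, h2geval] at hmink1
    linarith
  constructor
  · rw [hIDeq, hJFeq]
    exact hfirst
  · rw [hJFeq]
    rcases eq_or_lt_of_le hp with hp2 | hp2
    · -- p = 2
      subst hp2
      have he0 : (2:ℝ) - 2 = 0 := by norm_num
      have heint : (fun x => (δ + mnorm (G x) + mnorm (H x)) ^ ((2:ℝ) - 2)
            * mnorm (G x - H x) ^ (2:ℝ))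
          = fun x => mnorm (G x - H x) ^ (2:ℝ) := by
        funext x
        rw [he0, Real.rpow_zero, one_mul]
      rw [he0, Real.rpow_zero, Real.rpow_zero]
      have hIDeq2 : ((∫ x in Ω, mnorm (G x - H x) ^ (2:ℝ)) ^ ((1:ℝ)/2)) ^ (2:ℝ)
          = ∫ x in Ω, mnorm (G x - H x) ^ (2:ℝ) := by
        rw [← Real.rpow_mul hID0, one_div,
          inv_mul_cancel₀ (by norm_num : (2:ℝ) ≠ 0), Real.rpow_one]
      rw [hIDeq2]
      rw [heint] at hstep1
      calc (∫ x in Ω, mnorm (Fmap 2 δ (G x) - Fmap 2 δ (H x)) ^ (2:ℝ))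
          ≤ Cq * ∫ x in Ω, mnorm (G x - H x) ^ (2:ℝ) := hstep1
        _ = Cq * 1 * 1 * ∫ x in Ω, mnorm (G x - H x) ^ (2:ℝ) := by ring
    · -- 2 < p
      have hps : (0:ℝ) < p - 2 := by linarith
      have hps' : p - 2 ≠ 0 := ne_of_gt hps
      have hconj : Real.HolderConjugate (p / (p - 2)) (p / 2) := by
        rw [Real.holderConjugate_iff]
        constructor
        · rw [lt_div_iff₀ hps]; linarith
        · rw [inv_div, inv_div, ← add_div,
            show p - 2 + 2 = p from by ring]
          exact div_self hp0'
      have hPq0 : (0:ℝ) < p / (p - 2) := div_pos hp0 hps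
      have hQq0 : (0:ℝ) < p / 2 := div_pos hp0 (by norm_num)
      have heM : (fun x => ((δ + mnorm (G x) + mnorm (H x)) ^ (p - 2)) ^ (p / (p - 2)))
          = fun x => (δ + mnorm (G x) + mnorm (H x)) ^ p := by
        funext x
        rw [← Real.rpow_mul (hM0 x),
          show (p - 2) * (p / (p - 2)) = p from by field_simp]
      have heD : (fun x => (mnorm (G x - H x) ^ (2:ℝ)) ^ (p / 2))
          = fun x => mnorm (G x - H x) ^ p := by
        funext x
        rw [← Real.rpow_mul (hd0 x),
          show (2:ℝ) * (p / 2) = p from by field_simp]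
      have hfLp : MemLp (fun x => (δ + mnorm (G x) + mnorm (H x)) ^ (p - 2))
          (ENNReal.ofReal (p / (p - 2))) (volume.restrict Ω) :=
        Stmt13Aux.memLp_of_integrable_rpow
          (Stmt13Aux.measurable_rpow_comp hMmeas hps.le).aestronglyMeasurable
          (fun x => Real.rpow_nonneg (hM0 x) _) hPq0
          (by rw [show (fun x => ((δ + mnorm (G x) + mnorm (H x)) ^ (p - 2)) ^ (p / (p - 2)))
              = fun x => (δ + mnorm (G x) + mnorm (H x)) ^ p from heM]; exact hMint)
      have hgLp : MemLp (fun x => mnorm (G x - H x) ^ (2:ℝ))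
          (ENNReal.ofReal (p / 2)) (volume.restrict Ω) :=
        Stmt13Aux.memLp_of_integrable_rpow
          (Stmt13Aux.measurable_rpow_comp hdN (by norm_num)).aestronglyMeasurable
          (fun x => Real.rpow_nonneg (hd0 x) _) hQq0
          (by rw [show (fun x => (mnorm (G x - H x) ^ (2:ℝ)) ^ (p / 2))
              = fun x => mnorm (G x - H x) ^ p from heD]; exact hDint)
      have hholder := MeasureTheory.integral_mul_le_Lp_mul_Lq_of_nonneg hconj
        (Filter.Eventually.of_forall fun x => Real.rpow_nonneg (hM0 x) _)
        (Filter.Eventually.of_forall fun x => Real.rpow_nonneg (hd0 x) _)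
        hfLp hgLp
      rw [show (fun a => ((δ + mnorm (G a) + mnorm (H a)) ^ (p - 2)) ^ (p / (p - 2)))
          = fun x => (δ + mnorm (G x) + mnorm (H x)) ^ p from heM] at hholder
      rw [show (fun a => (mnorm (G a - H a) ^ (2:ℝ)) ^ (p / 2))
          = fun x => mnorm (G x - H x) ^ p from heD] at hholder
      -- rewrite the exponents
      have hexp1 : (1:ℝ) / (p / (p - 2)) = (1/p) * (p - 2) := by field_simp
      have hexp2 : (1:ℝ) / (p / 2) = (1/p) * 2 := by field_simp
      rw [hexp1, hexp2, Real.rpow_mul hIM0, Real.rpow_mul hID0] at hholder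
      -- bound the M-factor
      set T : ℝ := δ * (volume Ω).toReal ^ ((1:ℝ)/p)
          + (∫ x in Ω, mnorm (G x) ^ p) ^ ((1:ℝ)/p)
          + (∫ x in Ω, mnorm (G x - H x) ^ p) ^ ((1:ℝ)/p) with hTdef
      have hT0 : 0 ≤ T := by rw [hTdef]; linarith
      have hMfac : ((∫ x in Ω, (δ + mnorm (G x) + mnorm (H x)) ^ p) ^ ((1:ℝ)/p)) ^ (p - 2)
          ≤ 2 ^ (p - 2) * T ^ (p - 2) := by
        calc ((∫ x in Ω, (δ + mnorm (G x) + mnorm (H x)) ^ p) ^ ((1:ℝ)/p)) ^ (p - 2)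
            ≤ (2 * T) ^ (p - 2) :=
              Real.rpow_le_rpow (Real.rpow_nonneg hIM0 _) hMT hps.le
          _ = 2 ^ (p - 2) * T ^ (p - 2) := Real.mul_rpow (by norm_num) hT0
      have hDfac0 : (0:ℝ) ≤ ((∫ x in Ω, mnorm (G x - H x) ^ p) ^ ((1:ℝ)/p)) ^ (2:ℝ) :=
        Real.rpow_nonneg hIDr0 _
      have hfinal : (∫ x in Ω, (δ + mnorm (G x) + mnorm (H x)) ^ (p - 2)
              * mnorm (G x - H x) ^ (2:ℝ))
          ≤ 2 ^ (p - 2) * T ^ (p - 2)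
            * ((∫ x in Ω, mnorm (G x - H x) ^ p) ^ ((1:ℝ)/p)) ^ (2:ℝ) := by
        calc (∫ x in Ω, (δ + mnorm (G x) + mnorm (H x)) ^ (p - 2)
                * mnorm (G x - H x) ^ (2:ℝ))
            ≤ ((∫ x in Ω, (δ + mnorm (G x) + mnorm (H x)) ^ p) ^ ((1:ℝ)/p)) ^ (p - 2)
              * ((∫ x in Ω, mnorm (G x - H x) ^ p) ^ ((1:ℝ)/p)) ^ (2:ℝ) := hholder
          _ ≤ (2 ^ (p - 2) * T ^ (p - 2))
              * ((∫ x in Ω, mnorm (G x - H x) ^ p) ^ ((1:ℝ)/p)) ^ (2:ℝ) :=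
              mul_le_mul_of_nonneg_right hMfac hDfac0
      calc (∫ x in Ω, mnorm (Fmap p δ (G x) - Fmap p δ (H x)) ^ (2:ℝ))
          ≤ Cq * ∫ x in Ω, (δ + mnorm (G x) + mnorm (H x)) ^ (p - 2)
              * mnorm (G x - H x) ^ (2:ℝ) := hstep1
        _ ≤ Cq * (2 ^ (p - 2) * T ^ (p - 2)
              * ((∫ x in Ω, mnorm (G x - H x) ^ p) ^ ((1:ℝ)/p)) ^ (2:ℝ)) :=
            mul_le_mul_of_nonneg_left hfinal hCq0.le
        _ = Cq * 2 ^ (p - 2) * T ^ (p - 2)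
              * ((∫ x in Ω, mnorm (G x - H x) ^ p) ^ ((1:ℝ)/p)) ^ (2:ℝ) := by ring
end

section
/- Let p ∈ (1,2) and δ ∈ [0,1]. There exists a constant c > 0 depending only on p such that for every measurable symmetric-matrix-valued function G on Ω with ‖G‖_p < ∞: ‖G‖_p² ≤ c·K^{2−p}·‖F∘G‖₂² + c·‖F∘G‖₂^{4/p}, where K = δ·|Ω|^{1/p}. -/
open Matrix

open MeasureTheory

lemma mnorm_nonneg {d : ℕ} (A : Matrix (Fin d) (Fin d) ℝ) : 0 ≤ mnorm A :=
  Real.sqrt_nonneg _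

lemma mnorm_smul {d : ℕ} (c : ℝ) (A : Matrix (Fin d) (Fin d) ℝ) :
    mnorm (c • A) = |c| * mnorm A := by
  unfold mnorm mdot
  have h : ∑ i, ∑ j, (c • A) i j * (c • A) i j = c ^ 2 * ∑ i, ∑ j, A i j * A i j := by
    rw [Finset.mul_sum]
    refine Finset.sum_congr rfl fun i _ => ?_
    rw [Finset.mul_sum]
    refine Finset.sum_congr rfl fun j _ => ?_
    simp [Matrix.smul_apply, smul_eq_mul]
    ring
  rw [h, Real.sqrt_mul (sq_nonneg c), Real.sqrt_sq_eq_abs]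

lemma msym_eq {d : ℕ} {P : Matrix (Fin d) (Fin d) ℝ} (hP : Pᵀ = P) : msym P = P := by
  unfold msym
  rw [hP]
  ext i j
  simp [Matrix.smul_apply, Matrix.add_apply, smul_eq_mul]
  ring

lemma phi_ge_low {p δ t : ℝ} (hp1 : 1 < p) (hp2 : p < 2) (hδt : δ ≤ t) (hδ0 : 0 ≤ δ) (ht : 0 ≤ t) :
    t ^ p ≤ 2 ^ (2 - p) * ((δ + t) ^ (p - 2) * t ^ (2:ℝ)) := by
  rcases eq_or_lt_of_le ht with h0 | h0
  · rw [← h0, Real.zero_rpow (by norm_num : (2:ℝ) ≠ 0), Real.zero_rpow (ne_of_gt (by linarith : (0:ℝ) < p))]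
    simp
  · have h3 : 2 ^ (p - 2) * t ^ (p - 2) ≤ (δ + t) ^ (p - 2) := by
      have := Real.rpow_le_rpow_of_nonpos (by linarith : (0:ℝ) < δ + t)
        (by linarith : δ + t ≤ 2 * t) (by linarith : p - 2 ≤ 0)
      rwa [Real.mul_rpow (by norm_num) ht] at this
    have e1 : (2:ℝ) ^ (2 - p) * 2 ^ (p - 2) = 1 := by
      rw [← Real.rpow_add (by norm_num : (0:ℝ) < 2), show 2 - p + (p - 2) = 0 by ring,
        Real.rpow_zero]
    have e2 : t ^ (p - 2) * t ^ (2:ℝ) = t ^ p := by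
      rw [← Real.rpow_add h0, show p - 2 + 2 = p by ring]
    have h4 : (0:ℝ) ≤ 2 ^ (2 - p) := Real.rpow_nonneg (by norm_num) _
    have h5 : (0:ℝ) ≤ t ^ (2:ℝ) := Real.rpow_nonneg ht _
    calc t ^ p = 2 ^ (2 - p) * (2 ^ (p - 2) * t ^ (p - 2) * t ^ (2:ℝ)) := by
          rw [show (2:ℝ) ^ (2 - p) * (2 ^ (p - 2) * t ^ (p - 2) * t ^ (2:ℝ))
              = 2 ^ (2 - p) * 2 ^ (p - 2) * (t ^ (p - 2) * t ^ (2:ℝ)) by ring, e1, e2, one_mul]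
      _ ≤ 2 ^ (2 - p) * ((δ + t) ^ (p - 2) * t ^ (2:ℝ)) :=
          mul_le_mul_of_nonneg_left (mul_le_mul_of_nonneg_right h3 h5) h4

lemma phi_ge_high {p δ t : ℝ} (hp2 : p < 2) (ht0 : 0 ≤ t) (htδ : t < δ) :
    t ^ (2:ℝ) ≤ (2 * δ) ^ (2 - p) * ((δ + t) ^ (p - 2) * t ^ (2:ℝ)) := by
  have hδpos : 0 < δ := lt_of_le_of_lt ht0 htδ
  have h3 : (2 * δ) ^ (p - 2) ≤ (δ + t) ^ (p - 2) :=
    Real.rpow_le_rpow_of_nonpos (by linarith) (by linarith) (by linarith)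
  have e1 : (2 * δ) ^ (2 - p) * (2 * δ) ^ (p - 2) = 1 := by
    rw [← Real.rpow_add (by linarith : (0:ℝ) < 2 * δ), show 2 - p + (p - 2) = 0 by ring,
      Real.rpow_zero]
  have h4 : (0:ℝ) ≤ (2 * δ) ^ (2 - p) := Real.rpow_nonneg (by linarith) _
  have h5 : (0:ℝ) ≤ t ^ (2:ℝ) := Real.rpow_nonneg ht0 _
  calc t ^ (2:ℝ) = (2 * δ) ^ (2 - p) * ((2 * δ) ^ (p - 2) * t ^ (2:ℝ)) := by
        rw [show (2 * δ) ^ (2 - p) * ((2 * δ) ^ (p - 2) * t ^ (2:ℝ))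
            = (2 * δ) ^ (2 - p) * (2 * δ) ^ (p - 2) * t ^ (2:ℝ) by ring, e1, one_mul]
    _ ≤ _ := mul_le_mul_of_nonneg_left (mul_le_mul_of_nonneg_right h3 h5) h4

lemma phi_le {p δ t : ℝ} (hp1 : 1 < p) (hp2 : p < 2) (hδ0 : 0 ≤ δ) (hδ1 : δ ≤ 1) (ht : 0 ≤ t) :
    (δ + t) ^ (p - 2) * t ^ (2:ℝ) ≤ 2 ^ p * (1 + t ^ p) := by
  have hp0 : 0 < p := by linarith
  have h2p : (0:ℝ) < 2 ^ p := Real.rpow_pos_of_pos (by norm_num) _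
  have htp : (0:ℝ) ≤ t ^ p := Real.rpow_nonneg ht _
  rcases eq_or_lt_of_le (add_nonneg hδ0 ht) with h0 | h0
  · have ht0 : t = 0 := by linarith [(add_nonneg hδ0 ht)]
    rw [ht0, Real.zero_rpow (by norm_num : (2:ℝ) ≠ 0), mul_zero]
    positivity
  · have step1 : (δ + t) ^ (p - 2) * t ^ (2:ℝ) ≤ (δ + t) ^ p := by
      have ht2 : t ^ (2:ℝ) ≤ (δ + t) ^ (2:ℝ) :=
        Real.rpow_le_rpow ht (by linarith) (by norm_num)
      calc (δ + t) ^ (p - 2) * t ^ (2:ℝ) ≤ (δ + t) ^ (p - 2) * (δ + t) ^ (2:ℝ) :=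
            mul_le_mul_of_nonneg_left ht2 (Real.rpow_nonneg (by linarith) _)
        _ = (δ + t) ^ p := by rw [← Real.rpow_add h0, show p - 2 + 2 = p by ring]
    have step2 : (δ + t) ^ p ≤ (1 + t) ^ p :=
      Real.rpow_le_rpow (by linarith) (by linarith) (by linarith)
    have step3 : (1 + t) ^ p ≤ 2 ^ p * (1 + t ^ p) := by
      rcases le_total t 1 with h | h
      · have h1 : (1 + t) ^ p ≤ 2 ^ p :=
          Real.rpow_le_rpow (by linarith) (by linarith) (by linarith)
        nlinarith
      · have h2 : (1 + t) ^ p ≤ (2 * t) ^ p :=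
          Real.rpow_le_rpow (by linarith) (by linarith) (by linarith)
        rw [Real.mul_rpow (by norm_num) ht] at h2
        nlinarith
    linarith

lemma add_rpow_le2 {a b r : ℝ} (ha : 0 ≤ a) (hb : 0 ≤ b) (hr : 0 ≤ r) :
    (a + b) ^ r ≤ 2 ^ r * (a ^ r + b ^ r) := by
  have h2 : (0:ℝ) ≤ 2 ^ r := Real.rpow_nonneg (by norm_num) _
  rcases le_total a b with h | h
  · have h1 : (a + b) ^ r ≤ (2 * b) ^ r := Real.rpow_le_rpow (by linarith) (by linarith) hr
    rw [Real.mul_rpow (by norm_num) hb] at h1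
    have := Real.rpow_nonneg ha r
    nlinarith
  · have h1 : (a + b) ^ r ≤ (2 * a) ^ r := Real.rpow_le_rpow (by linarith) (by linarith) hr
    rw [Real.mul_rpow (by norm_num) ha] at h1
    have := Real.rpow_nonneg hb r
    nlinarith


lemma main_aux {X : Type*} [MeasurableSpace X] (μ : Measure X) (p δ : ℝ)
    (hp1 : 1 < p) (hp2 : p < 2) (hδ0 : 0 ≤ δ) (hδ1 : δ ≤ 1)
    (Ω : Set X) (hΩm : MeasurableSet Ω) (hΩfin : μ Ω < ⊤)
    (g f : X → ℝ) (hgm : Measurable g) (hfm : Measurable f)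
    (hg0 : ∀ x, 0 ≤ g x) (hf0 : ∀ x, 0 ≤ f x)
    (hf : ∀ x ∈ Ω, f x ^ (2:ℝ) = (δ + g x) ^ (p - 2) * g x ^ (2:ℝ))
    (hgint : IntegrableOn (fun x => g x ^ p) Ω μ) :
    ((∫ x in Ω, g x ^ p ∂μ) ^ ((1:ℝ)/p)) ^ (2:ℝ)
      ≤ 16 * (δ * (μ Ω).toReal ^ ((1:ℝ)/p)) ^ (2 - p)
          * ((∫ x in Ω, f x ^ (2:ℝ) ∂μ) ^ ((1:ℝ)/2)) ^ (2:ℝ)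
        + 16 * ((∫ x in Ω, f x ^ (2:ℝ) ∂μ) ^ ((1:ℝ)/2)) ^ ((4:ℝ)/p) := by
  have hp0 : (0:ℝ) < p := by linarith
  have hf2_nonneg : ∀ x, 0 ≤ f x ^ (2:ℝ) := fun x => Real.rpow_nonneg (hf0 x) _
  have hf2m : Measurable fun x => f x ^ (2:ℝ) := hfm.pow measurable_const
  have hg2m : Measurable fun x => g x ^ (2:ℝ) := hgm.pow measurable_const
  have hconst_int : IntegrableOn (fun _ => (1:ℝ)) Ω μ := integrableOn_const hΩfin.ne
  have hf2_int : IntegrableOn (fun x => f x ^ (2:ℝ)) Ω μ := by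
    have hdom : IntegrableOn (fun x => 2 ^ p * (1 + g x ^ p)) Ω μ := by
      have := (hconst_int.add hgint).const_mul ((2:ℝ) ^ p)
      simpa [IntegrableOn] using this
    apply hdom.mono' hf2m.aestronglyMeasurable.restrict
    filter_upwards [ae_restrict_mem hΩm] with x hx
    rw [Real.norm_of_nonneg (hf2_nonneg x), hf x hx]
    exact phi_le hp1 hp2 hδ0 hδ1 (hg0 x)
  set S := Ω ∩ {x | g x < δ} with hS_def
  set T := Ω ∩ {x | δ ≤ g x} with hT_def
  have hSm : MeasurableSet S := hΩm.inter (measurableSet_lt hgm measurable_const)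
  have hTm : MeasurableSet T := hΩm.inter (measurableSet_le measurable_const hgm)
  have hSsub : S ⊆ Ω := Set.inter_subset_left
  have hTsub : T ⊆ Ω := Set.inter_subset_left
  have hST : S ∪ T = Ω := by
    ext x
    constructor
    · rintro (⟨h, _⟩ | ⟨h, _⟩) <;> exact h
    · intro hx
      rcases lt_or_ge (g x) δ with h | h
      exacts [Or.inl ⟨hx, h⟩, Or.inr ⟨hx, h⟩]
  have hdisj : Disjoint S T := by
    rw [Set.disjoint_left]
    rintro x ⟨_, h1⟩ ⟨_, h2⟩
    simp only [Set.mem_setOf_eq] at h1 h2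
    linarith
  set A := ∫ x in Ω, f x ^ (2:ℝ) ∂μ with hA_def
  set I := ∫ x in Ω, g x ^ p ∂μ with hI_def
  have hA0 : 0 ≤ A := setIntegral_nonneg hΩm fun x _ => hf2_nonneg x
  have hI0 : 0 ≤ I := setIntegral_nonneg hΩm fun x _ => Real.rpow_nonneg (hg0 x) _
  have hf2_int_S : IntegrableOn (fun x => f x ^ (2:ℝ)) S μ := hf2_int.mono_set hSsub
  have hf2_int_T : IntegrableOn (fun x => f x ^ (2:ℝ)) T μ := hf2_int.mono_set hTsub
  have h22p : (0:ℝ) ≤ 2 ^ (2 - p) := Real.rpow_nonneg (by norm_num) _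
  have h2δ : (0:ℝ) ≤ (2 * δ) ^ (2 - p) := Real.rpow_nonneg (by linarith) _
  -- T bound
  have hT_bound : ∫ x in T, g x ^ p ∂μ ≤ 2 ^ (2 - p) * A := by
    have h1 : ∫ x in T, g x ^ p ∂μ ≤ ∫ x in T, 2 ^ (2 - p) * f x ^ (2:ℝ) ∂μ := by
      refine setIntegral_mono_on (hgint.mono_set hTsub) (hf2_int_T.const_mul _) hTm
        fun x hx => ?_
      rw [hf x (hTsub hx)]
      exact phi_ge_low hp1 hp2 hx.2 hδ0 (hg0 x)
    have h2 : ∫ x in T, 2 ^ (2 - p) * f x ^ (2:ℝ) ∂μ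
        = 2 ^ (2 - p) * ∫ x in T, f x ^ (2:ℝ) ∂μ := integral_const_mul _ _
    have h3 : ∫ x in T, f x ^ (2:ℝ) ∂μ ≤ A :=
      setIntegral_mono_set hf2_int (Filter.Eventually.of_forall fun x => hf2_nonneg x)
        (HasSubset.Subset.eventuallyLE hTsub)
    calc ∫ x in T, g x ^ p ∂μ ≤ 2 ^ (2 - p) * ∫ x in T, f x ^ (2:ℝ) ∂μ := by rw [← h2]; exact h1
      _ ≤ 2 ^ (2 - p) * A := mul_le_mul_of_nonneg_left h3 h22p
  -- S bound pieces
  have hg2_int_S : IntegrableOn (fun x => g x ^ (2:ℝ)) S μ := by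
    apply (hf2_int_S.const_mul ((2 * δ) ^ (2 - p))).mono' hg2m.aestronglyMeasurable.restrict
    filter_upwards [ae_restrict_mem hSm] with x hx
    rw [Real.norm_of_nonneg (Real.rpow_nonneg (hg0 x) _), hf x hx.1]
    exact phi_ge_high hp2 (hg0 x) hx.2
  have hg2_bound : ∫ x in S, g x ^ (2:ℝ) ∂μ ≤ (2 * δ) ^ (2 - p) * A := by
    have h1 : ∫ x in S, g x ^ (2:ℝ) ∂μ ≤ ∫ x in S, (2 * δ) ^ (2 - p) * f x ^ (2:ℝ) ∂μ := by
      refine setIntegral_mono_on hg2_int_S (hf2_int_S.const_mul _) hSm fun x hx => ?_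
      rw [hf x hx.1]
      exact phi_ge_high hp2 (hg0 x) hx.2
    have h2 : ∫ x in S, (2 * δ) ^ (2 - p) * f x ^ (2:ℝ) ∂μ
        = (2 * δ) ^ (2 - p) * ∫ x in S, f x ^ (2:ℝ) ∂μ := integral_const_mul _ _
    have h3 : ∫ x in S, f x ^ (2:ℝ) ∂μ ≤ A :=
      setIntegral_mono_set hf2_int (Filter.Eventually.of_forall fun x => hf2_nonneg x)
        (HasSubset.Subset.eventuallyLE hSsub)
    calc ∫ x in S, g x ^ (2:ℝ) ∂μ ≤ (2 * δ) ^ (2 - p) * ∫ x in S, f x ^ (2:ℝ) ∂μ := by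
          rw [← h2]; exact h1
      _ ≤ (2 * δ) ^ (2 - p) * A := mul_le_mul_of_nonneg_left h3 h2δ
  -- Hölder on S
  haveI : IsFiniteMeasure (μ.restrict S) :=
    ⟨by rw [Measure.restrict_apply_univ]; exact lt_of_le_of_lt (measure_mono hSsub) hΩfin⟩
  have hconj : ((2:ℝ)/p).HolderConjugate (2/(2 - p)) := by
    rw [Real.holderConjugate_iff]
    constructor
    · rw [lt_div_iff₀ hp0]; linarith
    · have h2p' : (2:ℝ) - p ≠ 0 := ne_of_gt (by linarith)
      rw [inv_div, inv_div]
      field_simp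
      ring
  have hMemg2 : MemLp g 2 (μ.restrict S) := by
    rw [memLp_two_iff_integrable_sq hgm.aestronglyMeasurable.restrict]
    have he : (fun x => g x ^ 2) = fun x => g x ^ (2:ℝ) := by
      funext x
      rw [← Real.rpow_natCast (g x) 2]
      norm_num
    rw [he]
    exact hg2_int_S
  have hMem1 : MemLp (fun x => g x ^ p) (ENNReal.ofReal (2/p)) (μ.restrict S) := by
    have he : ENNReal.ofReal (2/p) = 2 / ENNReal.ofReal p := by
      rw [ENNReal.ofReal_div_of_pos hp0, ENNReal.ofReal_ofNat]
    have hfe : (fun x => g x ^ p) = fun x => ‖g x‖ ^ (ENNReal.ofReal p).toReal := by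
      funext x
      rw [Real.norm_of_nonneg (hg0 x), ENNReal.toReal_ofReal hp0.le]
    rw [he, hfe]
    exact (memLp_norm_rpow_iff hgm.aestronglyMeasurable.restrict
      (by simp [ENNReal.ofReal_eq_zero]; linarith) ENNReal.ofReal_ne_top).2 hMemg2
  have hMem2 : MemLp (fun _ => (1:ℝ)) (ENNReal.ofReal (2/(2 - p))) (μ.restrict S) :=
    memLp_const 1
  have hH := integral_mul_le_Lp_mul_Lq_of_nonneg hconj
    (Filter.Eventually.of_forall fun x => Real.rpow_nonneg (hg0 x) p)
    (Filter.Eventually.of_forall fun _ => zero_le_one) hMem1 hMem2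
  simp only [mul_one, Real.one_rpow] at hH
  have hgg : ∀ x : X, ((g x) ^ p) ^ ((2:ℝ)/p) = g x ^ (2:ℝ) := fun x => by
    rw [← Real.rpow_mul (hg0 x)]
    congr 1
    field_simp
  simp only [hgg, integral_const, smul_eq_mul, mul_one, Measure.restrict_apply_univ,
    one_div_div] at hH
  -- hH : ∫ x in S, g x ^ p ∂μ ≤ (∫ x in S, g x ^ 2 ∂μ) ^ (p/2) * (μ S).toReal ^ ((2-p)/2)
  have hgS2_0 : 0 ≤ ∫ x in S, g x ^ (2:ℝ) ∂μ :=
    setIntegral_nonneg hSm fun x _ => Real.rpow_nonneg (hg0 x) _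
  set mΩ := (μ Ω).toReal with hmΩ_def
  have hm0 : 0 ≤ mΩ := ENNReal.toReal_nonneg
  have hfac1 : (∫ x in S, g x ^ (2:ℝ) ∂μ) ^ (p/2) ≤ ((2 * δ) ^ (2 - p) * A) ^ (p/2) :=
    Real.rpow_le_rpow hgS2_0 hg2_bound (by linarith)
  have hfac2 : (μ S).toReal ^ ((2 - p)/2) ≤ mΩ ^ ((2 - p)/2) :=
    Real.rpow_le_rpow ENNReal.toReal_nonneg
      (ENNReal.toReal_mono hΩfin.ne (measure_mono hSsub)) (by linarith)
  have hS_bound : ∫ x in S, g x ^ p ∂μ ≤ ((2 * δ) ^ (2 - p) * A) ^ (p/2) * mΩ ^ ((2 - p)/2) :=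
    le_trans hH (mul_le_mul hfac1 (by rwa [measureReal_restrict_apply_univ]) (Real.rpow_nonneg measureReal_nonneg _)
      (Real.rpow_nonneg (mul_nonneg h2δ hA0) _))
  -- split
  have hIsplit : I = ∫ x in S, g x ^ p ∂μ + ∫ x in T, g x ^ p ∂μ := by
    rw [hI_def, ← hST, setIntegral_union hdisj hTm (hgint.mono_set hSsub) (hgint.mono_set hTsub)]
  have hImain : I ≤ 2 ^ (2 - p) * A + ((2 * δ) ^ (2 - p) * A) ^ (p/2) * mΩ ^ ((2 - p)/2) := by
    rw [hIsplit]; linarith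
  -- final exponent juggling
  have hLHS : (I ^ ((1:ℝ)/p)) ^ (2:ℝ) = I ^ ((2:ℝ)/p) := by
    rw [← Real.rpow_mul hI0]
    congr 1
    ring
  have hR1 : (A ^ ((1:ℝ)/2)) ^ (2:ℝ) = A := by
    rw [← Real.rpow_mul hA0, show (1:ℝ)/2*2 = 1 by norm_num, Real.rpow_one]
  have hR2 : (A ^ ((1:ℝ)/2)) ^ ((4:ℝ)/p) = A ^ ((2:ℝ)/p) := by
    rw [← Real.rpow_mul hA0]
    congr 1
    field_simp
    ring
  rw [hLHS, hR1, hR2]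
  have hBa : 0 ≤ 2 ^ (2 - p) * A := mul_nonneg h22p hA0
  have hBb : 0 ≤ ((2 * δ) ^ (2 - p) * A) ^ (p/2) * mΩ ^ ((2 - p)/2) :=
    mul_nonneg (Real.rpow_nonneg (mul_nonneg h2δ hA0) _) (Real.rpow_nonneg hm0 _)
  have hstep1 : I ^ ((2:ℝ)/p)
      ≤ (2 ^ (2 - p) * A + ((2 * δ) ^ (2 - p) * A) ^ (p/2) * mΩ ^ ((2 - p)/2)) ^ ((2:ℝ)/p) :=
    Real.rpow_le_rpow hI0 hImain (by positivity)
  have hstep2 := add_rpow_le2 hBa hBb (by positivity : (0:ℝ) ≤ 2/p)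
  have hea : (2 ^ (2 - p) * A) ^ ((2:ℝ)/p) = (2:ℝ) ^ ((2 - p) * (2/p)) * A ^ ((2:ℝ)/p) := by
    rw [Real.mul_rpow h22p hA0, ← Real.rpow_mul (by norm_num : (0:ℝ) ≤ 2)]
  have heb : (((2 * δ) ^ (2 - p) * A) ^ (p/2) * mΩ ^ ((2 - p)/2)) ^ ((2:ℝ)/p)
      = (2 * δ) ^ (2 - p) * A * mΩ ^ ((2 - p)/p) := by
    rw [Real.mul_rpow (Real.rpow_nonneg (mul_nonneg h2δ hA0) _) (Real.rpow_nonneg hm0 _),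
      ← Real.rpow_mul (mul_nonneg h2δ hA0), ← Real.rpow_mul hm0,
      (by field_simp : p/2*(2/p) = 1),
      (by field_simp : (2 - p)/2*(2/p) = (2 - p)/p),
      Real.rpow_one]
  have hdd : ((2:ℝ) * δ) ^ (2 - p) = 2 ^ (2 - p) * δ ^ (2 - p) := Real.mul_rpow (by norm_num) hδ0
  have hKK : (δ * mΩ ^ ((1:ℝ)/p)) ^ (2 - p) = δ ^ (2 - p) * mΩ ^ ((2 - p)/p) := by
    rw [Real.mul_rpow hδ0 (Real.rpow_nonneg hm0 _), ← Real.rpow_mul hm0,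
      show (1:ℝ)/p*(2 - p) = (2 - p)/p by ring]
  have hc1 : (2:ℝ) ^ ((2:ℝ)/p) * 2 ^ ((2 - p) * (2/p)) ≤ 16 := by
    rw [← Real.rpow_add (by norm_num : (0:ℝ) < 2)]
    calc (2:ℝ) ^ (2/p + (2 - p) * (2/p)) ≤ 2 ^ (4:ℝ) := by
          apply Real.rpow_le_rpow_of_exponent_le one_le_two
          rw [show (2:ℝ)/p + (2 - p) * (2/p) = (6 - 2*p)/p by field_simp; ring, div_le_iff₀ hp0]
          linarith
      _ = 16 := by
          rw [show (4:ℝ) = ((4:ℕ):ℝ) by norm_num, Real.rpow_natCast]; norm_num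
  have hc2 : (2:ℝ) ^ ((2:ℝ)/p) * 2 ^ (2 - p) ≤ 16 := by
    rw [← Real.rpow_add (by norm_num : (0:ℝ) < 2)]
    calc (2:ℝ) ^ (2/p + (2 - p)) ≤ 2 ^ (4:ℝ) := by
          apply Real.rpow_le_rpow_of_exponent_le one_le_two
          rw [show (2:ℝ)/p + (2 - p) = (2 + (2 - p)*p)/p by field_simp, div_le_iff₀ hp0]
          nlinarith
      _ = 16 := by
          rw [show (4:ℝ) = ((4:ℕ):ℝ) by norm_num, Real.rpow_natCast]; norm_num
  have hA2p : 0 ≤ A ^ ((2:ℝ)/p) := Real.rpow_nonneg hA0 _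
  have hδ2p : (0:ℝ) ≤ δ ^ (2 - p) := Real.rpow_nonneg hδ0 _
  have hD : 0 ≤ δ ^ (2 - p) * mΩ ^ ((2 - p)/p) * A :=
    mul_nonneg (mul_nonneg hδ2p (Real.rpow_nonneg hm0 _)) hA0
  calc I ^ ((2:ℝ)/p)
      ≤ (2 ^ (2 - p) * A + ((2 * δ) ^ (2 - p) * A) ^ (p/2) * mΩ ^ ((2 - p)/2)) ^ ((2:ℝ)/p) :=
        hstep1
    _ ≤ 2 ^ ((2:ℝ)/p) * ((2 ^ (2 - p) * A) ^ ((2:ℝ)/p)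
          + (((2 * δ) ^ (2 - p) * A) ^ (p/2) * mΩ ^ ((2 - p)/2)) ^ ((2:ℝ)/p)) := hstep2
    _ = 2 ^ ((2:ℝ)/p) * 2 ^ ((2 - p) * (2/p)) * A ^ ((2:ℝ)/p)
          + 2 ^ ((2:ℝ)/p) * 2 ^ (2 - p) * (δ ^ (2 - p) * mΩ ^ ((2 - p)/p) * A) := by
        rw [hea, heb, hdd]; ring
    _ ≤ 16 * A ^ ((2:ℝ)/p) + 16 * (δ ^ (2 - p) * mΩ ^ ((2 - p)/p) * A) := by
        have t1 := mul_le_mul_of_nonneg_right hc1 hA2p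
        have t2 := mul_le_mul_of_nonneg_right hc2 hD
        linarith
    _ = 16 * (δ * mΩ ^ ((1:ℝ)/p)) ^ (2 - p) * A + 16 * A ^ ((2:ℝ)/p) := by
        rw [hKK]; ring

/-- Let `p ∈ (1,2)` and `δ ∈ [0,1]`. There is a constant `c > 0` depending only on `p`
such that for every bounded measurable `Ω ⊂ ℝᵈ` of positive measure and every measurable
symmetric-matrix-valued `G ∈ Lᵖ(Ω)`:
`‖G‖ₚ² ≤ c * K^(2-p) * ‖F∘G‖₂² + c * ‖F∘G‖₂^(4/p)`, where `K = δ * |Ω|^(1/p)`. -/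
theorem stmt15 (p δ : ℝ) (hp1 : 1 < p) (hp2 : p < 2) (hδ0 : 0 ≤ δ) (hδ1 : δ ≤ 1) :
    ∃ c : ℝ, 0 < c ∧
      ∀ (d : ℕ) (Ω : Set (Fin d → ℝ)),
        MeasurableSet Ω → Bornology.IsBounded Ω → 0 < volume Ω →
        ∀ G : (Fin d → ℝ) → Matrix (Fin d) (Fin d) ℝ,
          (∀ i j, Measurable fun x => G x i j) →
          (∀ x ∈ Ω, (G x)ᵀ = G x) →
          IntegrableOn (fun x => mnorm (G x) ^ p) Ω volume →
          ((∫ x in Ω, mnorm (G x) ^ p) ^ ((1:ℝ)/p)) ^ (2:ℝ)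
            ≤ c * (δ * (volume Ω).toReal ^ ((1:ℝ)/p)) ^ (2 - p)
                * ((∫ x in Ω, mnorm (Fmap p δ (G x)) ^ (2:ℝ)) ^ ((1:ℝ)/2)) ^ (2:ℝ)
              + c * ((∫ x in Ω, mnorm (Fmap p δ (G x)) ^ (2:ℝ)) ^ ((1:ℝ)/2))
                  ^ ((4:ℝ)/p) := by
  refine ⟨16, by norm_num, ?_⟩
  intro d Ω hΩm hΩb hΩpos G hGmeas hGsym hGint
  have hentry : ∀ i j, Measurable fun x => msym (G x) i j := by
    intro i j
    have h : (fun x => msym (G x) i j) = fun x => (2⁻¹:ℝ) * (G x i j + G x j i) := by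
      funext x
      simp [msym, Matrix.transpose_apply, Matrix.add_apply, Matrix.smul_apply, smul_eq_mul]
    rw [h]
    exact ((hGmeas i j).add (hGmeas j i)).const_mul _
  have hs_meas : Measurable fun x => mnorm (msym (G x)) := by
    have hd : Measurable fun x => mdot (msym (G x)) (msym (G x)) := by
      unfold mdot
      exact Finset.measurable_sum _ fun i _ =>
        Finset.measurable_sum _ fun j _ => (hentry i j).mul (hentry i j)
    unfold mnorm
    exact Real.continuous_sqrt.measurable.comp hd
  have hg_meas : Measurable fun x => mnorm (G x) := by
    have hd : Measurable fun x => mdot (G x) (G x) := by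
      unfold mdot
      exact Finset.measurable_sum _ fun i _ =>
        Finset.measurable_sum _ fun j _ => (hGmeas i j).mul (hGmeas i j)
    unfold mnorm
    exact Real.continuous_sqrt.measurable.comp hd
  have hsg : ∀ x ∈ Ω, mnorm (msym (G x)) = mnorm (G x) := fun x hx => by
    rw [msym_eq (hGsym x hx)]
  have hf_eq : ∀ x, mnorm (Fmap p δ (G x))
      = (δ + mnorm (msym (G x))) ^ ((p - 2)/2) * mnorm (msym (G x)) := by
    intro x
    unfold Fmap
    rw [mnorm_smul, abs_of_nonneg (Real.rpow_nonneg (add_nonneg hδ0 (mnorm_nonneg _)) _)]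
  have hf_meas : Measurable fun x => mnorm (Fmap p δ (G x)) := by
    simp only [hf_eq]
    exact ((measurable_const.add hs_meas).pow measurable_const).mul hs_meas
  have hf_id : ∀ x ∈ Ω, mnorm (Fmap p δ (G x)) ^ (2:ℝ)
      = (δ + mnorm (G x)) ^ (p - 2) * mnorm (G x) ^ (2:ℝ) := by
    intro x hx
    rw [hf_eq x, hsg x hx,
      Real.mul_rpow (Real.rpow_nonneg (add_nonneg hδ0 (mnorm_nonneg _)) _) (mnorm_nonneg _),
      ← Real.rpow_mul (add_nonneg hδ0 (mnorm_nonneg _)), show (p - 2)/2*2 = p - 2 by ring]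
  have hf0 : ∀ x, 0 ≤ mnorm (Fmap p δ (G x)) := fun x => mnorm_nonneg _
  exact main_aux volume p δ hp1 hp2 hδ0 hδ1 Ω hΩm hΩb.measure_lt_top
    (fun x => mnorm (G x)) (fun x => mnorm (Fmap p δ (G x))) hg_meas hf_meas
    (fun x => mnorm_nonneg _) hf0 hf_id hGint
end

section
/- Let E be a real Banach space, let t₀ < t₁ be real numbers and write Δt = t₁ − t₀. Let φ : ℝ → E be Bochner integrable on [t₀,t₁] with s ↦ ‖φ(s)‖² integrable on [t₀,t₁], and let g : ℝ → E satisfy g(t) = g(t₀) + ∫_{t₀}^{t} φ(s) ds for all t ∈ [t₀,t₁]. Then ‖g(t₁) − (Δt)⁻¹·∫_{t₀}^{t₁} g(s) ds‖² ≤ Δt·∫_{t₀}^{t₁} ‖φ(s)‖² ds. -/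
open MeasureTheory

/-- Let `E` be a real Banach space, `t₀ < t₁`, `Δt = t₁ - t₀`. If `φ : ℝ → E` is Bochner
integrable on `[t₀,t₁]` with `s ↦ ‖φ(s)‖²` integrable on `[t₀,t₁]`, and
`g(t) = g(t₀) + ∫_{t₀}^{t} φ(s) ds` for all `t ∈ [t₀,t₁]`, then
`‖g(t₁) - (Δt)⁻¹ • ∫_{t₀}^{t₁} g(s) ds‖² ≤ Δt * ∫_{t₀}^{t₁} ‖φ(s)‖² ds`. -/
theorem stmt16 {E : Type*} [NormedAddCommGroup E] [NormedSpace ℝ E] [CompleteSpace E]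
    (t₀ t₁ : ℝ) (ht : t₀ < t₁) (φ g : ℝ → E)
    (hφ : IntegrableOn φ (Set.Icc t₀ t₁) volume)
    (hφ2 : IntegrableOn (fun s => ‖φ s‖ ^ 2) (Set.Icc t₀ t₁) volume)
    (hg : ∀ t ∈ Set.Icc t₀ t₁, g t = g t₀ + ∫ s in t₀..t, φ s) :
    ‖g t₁ - (t₁ - t₀)⁻¹ • ∫ s in t₀..t₁, g s‖ ^ 2
      ≤ (t₁ - t₀) * ∫ s in t₀..t₁, ‖φ s‖ ^ 2 := by
  have hΔ : (0 : ℝ) < t₁ - t₀ := by linarith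
  have hle : t₀ ≤ t₁ := ht.le
  set B : ℝ := ∫ s in t₀..t₁, ‖φ s‖ with hB
  have hφuIcc : Set.uIcc t₀ t₁ = Set.Icc t₀ t₁ := Set.uIcc_of_le hle
  -- interval integrability of φ on subintervals
  have hφint : ∀ a b, a ∈ Set.Icc t₀ t₁ → b ∈ Set.Icc t₀ t₁ →
      IntervalIntegrable φ volume a b := by
    intro a b ha hb
    rw [intervalIntegrable_iff]
    have ha' : a ∈ Set.uIcc t₀ t₁ := by rw [hφuIcc]; exact ha
    have hb' : b ∈ Set.uIcc t₀ t₁ := by rw [hφuIcc]; exact hb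
    exact hφ.mono_set ((Set.uIoc_subset_uIcc).trans
      ((Set.uIcc_subset_uIcc ha' hb').trans hφuIcc.subset))
  have hφnormint : ∀ a b, a ∈ Set.Icc t₀ t₁ → b ∈ Set.Icc t₀ t₁ →
      IntervalIntegrable (fun s => ‖φ s‖) volume a b :=
    fun a b ha hb => (hφint a b ha hb).norm
  have hBnonneg : 0 ≤ B := intervalIntegral.integral_nonneg hle (fun _ _ => norm_nonneg _)
  have hmem : t₀ ∈ Set.Icc t₀ t₁ := Set.left_mem_Icc.2 hle
  have hmem1 : t₁ ∈ Set.Icc t₀ t₁ := Set.right_mem_Icc.2 hle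
  -- key pointwise bound
  have hkey : ∀ s ∈ Set.Icc t₀ t₁, ‖g t₁ - g s‖ ≤ B := by
    intro s hs
    have hsplit : (∫ u in t₀..s, φ u) + (∫ u in s..t₁, φ u) = ∫ u in t₀..t₁, φ u :=
      intervalIntegral.integral_add_adjacent_intervals (hφint t₀ s hmem hs)
        (hφint s t₁ hs hmem1)
    have hdiff : g t₁ - g s = ∫ u in s..t₁, φ u := by
      rw [hg t₁ hmem1, hg s hs]
      abel_nf
      rw [← hsplit]
      abel
    rw [hdiff]
    calc ‖∫ u in s..t₁, φ u‖ ≤ ∫ u in s..t₁, ‖φ u‖ :=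
          intervalIntegral.norm_integral_le_integral_norm hs.2
      _ ≤ B := by
          rw [hB, ← intervalIntegral.integral_add_adjacent_intervals
            (hφnormint t₀ s hmem hs) (hφnormint s t₁ hs hmem1)]
          have : 0 ≤ ∫ u in t₀..s, ‖φ u‖ :=
            intervalIntegral.integral_nonneg hs.1 (fun _ _ => norm_nonneg _)
          linarith
  -- g is integrable on the interval
  have hgint : IntervalIntegrable g volume t₀ t₁ := by
    rw [intervalIntegrable_iff_integrableOn_Ioc_of_le hle]
    have hcont : ContinuousOn (fun x => g t₀ + ∫ s in t₀..x, φ s) (Set.Icc t₀ t₁) :=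
      continuousOn_const.add (by
        have := intervalIntegral.continuousOn_primitive_interval (μ := volume) (f := φ)
          (a := t₀) (b := t₁) (hφuIcc ▸ hφ)
        rwa [hφuIcc] at this)
    exact ((hcont.integrableOn_Icc).congr_fun (fun x hx => (hg x hx).symm)
      measurableSet_Icc).mono_set Set.Ioc_subset_Icc_self
  -- first estimate: norm of deviation ≤ B
  have hdev : ‖g t₁ - (t₁ - t₀)⁻¹ • ∫ s in t₀..t₁, g s‖ ≤ B := by
    have hconst : (∫ _ in t₀..t₁, g t₁) = (t₁ - t₀) • g t₁ := by simp
    have heq : g t₁ - (t₁ - t₀)⁻¹ • ∫ s in t₀..t₁, g s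
        = (t₁ - t₀)⁻¹ • ∫ s in t₀..t₁, (g t₁ - g s) := by
      rw [intervalIntegral.integral_sub intervalIntegrable_const hgint, hconst,
        smul_sub, smul_smul, inv_mul_cancel₀ hΔ.ne', one_smul]
    rw [heq, norm_smul, Real.norm_eq_abs, abs_of_pos (inv_pos.2 hΔ)]
    have hbound : ‖∫ s in t₀..t₁, (g t₁ - g s)‖ ≤ B * |t₁ - t₀| := by
      apply intervalIntegral.norm_integral_le_of_norm_le_const
      intro x hx
      rw [Set.uIoc_of_le hle] at hx
      exact hkey x (Set.Ioc_subset_Icc_self hx)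
    calc (t₁ - t₀)⁻¹ * ‖∫ s in t₀..t₁, (g t₁ - g s)‖
        ≤ (t₁ - t₀)⁻¹ * (B * |t₁ - t₀|) := by
          exact mul_le_mul_of_nonneg_left hbound (inv_pos.2 hΔ).le
      _ = B := by
          rw [abs_of_pos hΔ]; field_simp
  -- Cauchy-Schwarz: B ^ 2 ≤ (t₁ - t₀) * ∫ ‖φ‖ ^ 2
  have hCS : B ^ 2 ≤ (t₁ - t₀) * ∫ s in t₀..t₁, ‖φ s‖ ^ 2 := by
    set μ := volume.restrict (Set.Icc t₀ t₁) with hμ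
    have hμfin : IsFiniteMeasure μ := by
      constructor
      rw [hμ, Measure.restrict_apply_univ]
      exact measure_Icc_lt_top
    have hmes : AEStronglyMeasurable (fun s => ‖φ s‖) μ := hφ.1.norm
    have hmemℒp : MemLp (fun s => ‖φ s‖) 2 μ := by
      rw [memLp_two_iff_integrable_sq hmes]
      exact hφ2
    have hone : MemLp (fun _ : ℝ => (1 : ℝ)) 2 μ := memLp_const 1
    have hpq : Real.HolderConjugate 2 2 := Real.HolderConjugate.two_two
    have hH := integral_mul_le_Lp_mul_Lq_of_nonneg (μ := μ) hpq
      (f := fun _ => (1 : ℝ)) (g := fun s => ‖φ s‖)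
      (Filter.Eventually.of_forall fun _ => zero_le_one)
      (Filter.Eventually.of_forall fun _ => norm_nonneg _)
      (by simpa using hone) (by simpa using hmemℒp)
    simp only [one_mul] at hH
    have hμreal : (μ Set.univ).toReal = t₁ - t₀ := by
      rw [hμ, Measure.restrict_apply_univ, Real.volume_Icc, ENNReal.toReal_ofReal hΔ.le]
    have hone_pow : (∫ a, (1 : ℝ) ^ (2 : ℝ) ∂μ) = t₁ - t₀ := by
      simp [integral_const, smul_eq_mul, Measure.real, hμreal]
    rw [hone_pow] at hH
    have hint_eq : B = ∫ a, ‖φ a‖ ∂μ := by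
      rw [hB, intervalIntegral.integral_of_le hle, hμ,
        ← integral_Icc_eq_integral_Ioc]
    have hsq_eq : (∫ a, ‖φ a‖ ^ (2 : ℝ) ∂μ) = ∫ s in t₀..t₁, ‖φ s‖ ^ 2 := by
      rw [intervalIntegral.integral_of_le hle, ← integral_Icc_eq_integral_Ioc]
      apply integral_congr_ae
      filter_upwards with x
      rw [← Real.rpow_natCast ‖φ x‖ 2]
      norm_num
    rw [hsq_eq] at hH
    set I : ℝ := ∫ s in t₀..t₁, ‖φ s‖ ^ 2 with hI
    have hInonneg : 0 ≤ I :=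
      intervalIntegral.integral_nonneg hle (fun _ _ => sq_nonneg _)
    have hBle : B ≤ (t₁ - t₀) ^ ((1 : ℝ)/2) * I ^ ((1 : ℝ)/2) := hint_eq ▸ hH
    calc B ^ 2 ≤ ((t₁ - t₀) ^ ((1 : ℝ)/2) * I ^ ((1 : ℝ)/2)) ^ 2 := by
          apply pow_le_pow_left₀ hBnonneg hBle
      _ = (t₁ - t₀) * I := by
          rw [mul_pow, ← Real.rpow_natCast ((t₁ - t₀) ^ ((1:ℝ)/2)) 2,
            ← Real.rpow_natCast (I ^ ((1:ℝ)/2)) 2,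
            ← Real.rpow_mul hΔ.le, ← Real.rpow_mul hInonneg]
          norm_num
  calc ‖g t₁ - (t₁ - t₀)⁻¹ • ∫ s in t₀..t₁, g s‖ ^ 2 ≤ B ^ 2 :=
        pow_le_pow_left₀ (norm_nonneg _) hdev 2
    _ ≤ (t₁ - t₀) * ∫ s in t₀..t₁, ‖φ s‖ ^ 2 := hCS
end
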